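/- arXiv:2101.06366 — 5 statements merged into one kernel-verified Lean document; each statement's English description precedes it below -/
import Mathlib

section
/- Let {X_{k,n} : k,n ≥ 1} be a double array of φ-subgaussian random variables with sup_{k,n ∈ ℕ} τ_φ(X_{k,n}) ≤ 1. Suppose there exists ε₀ > 0 such that for every ε ∈ (0, ε₀], ∫₀^∞ ψ(x) q_φ(x) exp(−ε q_φ(x)) dx < +∞. Then (max_{1 ≤ k ≤ m, 1 ≤ n ≤ j} X_{k,n} − ψ^{−1}(ln(mj)))⁺ → 0 almost surely as m ∨ j → ∞, where u⁺ = max(u, 0). -/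
open MeasureTheory Real Filter Set
open scoped ENNReal

/-- An Orlicz N-function: continuous, even, convex, vanishing at `0`, monotone
increasing on `[0, ∞)`, with `φ x / x → 0` as `x → 0⁺` and `φ x / x → ∞` as `x → ∞`. -/
structure IsOrliczN (φ : ℝ → ℝ) : Prop where
  continuous : Continuous φ
  even : ∀ x, φ (-x) = φ x
  convexOn : ConvexOn ℝ Set.univ φ
  map_zero : φ 0 = 0
  strictMonoOn : StrictMonoOn φ (Set.Ici 0)
  tendsto_zero : Tendsto (fun x => φ x / x) (nhdsWithin 0 (Set.Ioi 0)) (nhds 0)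
  tendsto_atTop : Tendsto (fun x => φ x / x) atTop atTop

/-- `ψ` is the Young–Fenchel transform of `φ`: `ψ x = sup_{y ∈ ℝ} (x * y - φ y)`. -/
def IsYoungFenchel (φ ψ : ℝ → ℝ) : Prop :=
  ∀ x, IsLUB {z | ∃ y, z = x * y - φ y} (ψ x)

/-- The moment generating function bound `E exp(t X) ≤ exp (φ (a t))` with constant `a > 0`. -/
def PhiMGF (φ : ℝ → ℝ) {Ω : Type*} [MeasurableSpace Ω] (P : Measure Ω) (X : Ω → ℝ)
    (a : ℝ) : Prop :=
  0 < a ∧ ∀ t : ℝ, Integrable (fun ω => Real.exp (t * X ω)) P ∧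
    ∫ ω, Real.exp (t * X ω) ∂P ≤ Real.exp (φ (a * t))

/-- `X` is a `φ`-subgaussian random variable: centered, with an MGF bound. -/
def IsPhiSubGaussian (φ : ℝ → ℝ) {Ω : Type*} [MeasurableSpace Ω] (P : Measure Ω)
    (X : Ω → ℝ) : Prop :=
  Integrable X P ∧ (∫ ω, X ω ∂P) = 0 ∧ ∃ a, PhiMGF φ P X a

/-- The `φ`-subgaussian norm `τ_φ(X)`. -/
noncomputable def tauPhi (φ : ℝ → ℝ) {Ω : Type*} [MeasurableSpace Ω] (P : Measure Ω)
    (X : Ω → ℝ) : ℝ :=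
  sInf {a | PhiMGF φ P X a}

/-- `max_{1 ≤ k ≤ m, 1 ≤ n ≤ j} X_{k,n}(ω)`. -/
noncomputable def runMax {Ω : Type*} (X : ℕ → ℕ → Ω → ℝ) (m j : ℕ) (ω : Ω) : ℝ :=
  sSup {y | ∃ k n, 1 ≤ k ∧ k ≤ m ∧ 1 ≤ n ∧ n ≤ j ∧ y = X k n ω}

/-- Convergence of a double array `b m j` to `l` as `m ∨ j → ∞`. -/
def TendstoMaxIdx (b : ℕ → ℕ → ℝ) (l : ℝ) : Prop :=
  ∀ ε > 0, ∃ N : ℕ, ∀ m j : ℕ, 1 ≤ m → 1 ≤ j → N ≤ max m j → |b m j - l| < ε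

/-! ### helper lemmas -/

private lemma qInt {q : ℝ → ℝ} (hq_mono : MonotoneOn q (Set.Ici 0)) {a b : ℝ}
    (ha : 0 ≤ a) (hb : 0 ≤ b) : IntervalIntegrable q volume a b := by
  apply MonotoneOn.intervalIntegrable
  apply hq_mono.mono
  intro x hx
  rcases Set.mem_uIcc.1 hx with ⟨h, _⟩ | ⟨h, _⟩
  · exact Set.mem_Ici.2 (ha.trans h)
  · exact Set.mem_Ici.2 (hb.trans h)

private lemma psi_sub {ψ q : ℝ → ℝ} (hq_mono : MonotoneOn q (Set.Ici 0))
    (hψq : ∀ x, 0 ≤ x → ψ x = ∫ t in (0:ℝ)..x, q t) {a b : ℝ}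
    (ha : 0 ≤ a) (hab : a ≤ b) : ψ b - ψ a = ∫ x in a..b, q x := by
  rw [hψq a ha, hψq b (ha.trans hab)]
  exact intervalIntegral.integral_interval_sub_left
    (qInt hq_mono le_rfl (ha.trans hab)) (qInt hq_mono le_rfl ha)

private lemma psi_mono {ψ q : ℝ → ℝ} (hq_mono : MonotoneOn q (Set.Ici 0))
    (hq_nonneg : ∀ x, 0 ≤ x → 0 ≤ q x)
    (hψq : ∀ x, 0 ≤ x → ψ x = ∫ t in (0:ℝ)..x, q t) :
    ∀ s t : ℝ, 0 ≤ s → s ≤ t → ψ s ≤ ψ t := by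
  intro s t hs hst
  have h := psi_sub hq_mono hψq hs hst
  have hnn : 0 ≤ ∫ x in s..t, q x :=
    intervalIntegral.integral_nonneg hst (fun x hx => hq_nonneg x (hs.trans hx.1))
  linarith

private lemma psi_incr {ψ q : ℝ → ℝ} (hq_mono : MonotoneOn q (Set.Ici 0))
    (hψq : ∀ x, 0 ≤ x → ψ x = ∫ t in (0:ℝ)..x, q t) {u η : ℝ} (hu : 0 ≤ u) (hη : 0 ≤ η) :
    ψ u + η * q u ≤ ψ (u + η) := by
  have hsub : ψ (u + η) - ψ u = ∫ x in u..(u + η), q x := psi_sub hq_mono hψq hu (by linarith)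
  have hconst : ∫ _x in u..(u + η), q u ≤ ∫ x in u..(u + η), q x := by
    refine intervalIntegral.integral_mono_on (by linarith) intervalIntegrable_const
      (qInt hq_mono hu (by linarith)) (fun x hx => ?_)
    exact hq_mono (Set.mem_Ici.2 hu) (Set.mem_Ici.2 (hu.trans hx.1)) hx.1
  rw [intervalIntegral.integral_const] at hconst
  simp only [add_sub_cancel_left, smul_eq_mul] at hconst
  linarith

private lemma psiinv_mono {ψ ψinv q : ℝ → ℝ} (hq_mono : MonotoneOn q (Set.Ici 0))
    (hq_nonneg : ∀ x, 0 ≤ x → 0 ≤ q x)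
    (hψq : ∀ x, 0 ≤ x → ψ x = ∫ t in (0:ℝ)..x, q t)
    (hψinv : ∀ x, 0 ≤ x → 0 ≤ ψinv x ∧ ψ (ψinv x) = x) :
    ∀ s t : ℝ, 0 ≤ s → s ≤ t → ψinv s ≤ ψinv t := by
  intro s t hs hst
  by_contra h
  push_neg at h
  have h1 : ψ (ψinv t) ≤ ψ (ψinv s) :=
    psi_mono hq_mono hq_nonneg hψq _ _ (hψinv t (hs.trans hst)).1 h.le
  rw [(hψinv t (hs.trans hst)).2, (hψinv s hs).2] at h1
  have hst' : s = t := le_antisymm hst h1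
  rw [hst'] at h
  exact lt_irrefl _ h

private lemma runMax_set_eq {Ω : Type*} (X : ℕ → ℕ → Ω → ℝ) (m j : ℕ) (ω : Ω) :
    {y | ∃ k n, 1 ≤ k ∧ k ≤ m ∧ 1 ≤ n ∧ n ≤ j ∧ y = X k n ω} =
      ↑((Finset.Icc 1 m ×ˢ Finset.Icc 1 j).image fun p => X p.1 p.2 ω) := by
  ext y
  simp only [Set.mem_setOf_eq, Finset.coe_image, Set.mem_image, Finset.mem_coe,
    Finset.mem_product, Finset.mem_Icc]
  constructor
  · rintro ⟨k, n, h1, h2, h3, h4, rfl⟩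
    exact ⟨(k, n), ⟨⟨h1, h2⟩, ⟨h3, h4⟩⟩, rfl⟩
  · rintro ⟨⟨k, n⟩, ⟨⟨h1, h2⟩, ⟨h3, h4⟩⟩, rfl⟩
    exact ⟨k, n, h1, h2, h3, h4, rfl⟩

private lemma runMax_le_runMax {Ω : Type*} (X : ℕ → ℕ → Ω → ℝ) {m j m' j' : ℕ}
    (hm1 : 1 ≤ m) (hj1 : 1 ≤ j) (hm : m ≤ m') (hj : j ≤ j') (ω : Ω) :
    runMax X m j ω ≤ runMax X m' j' ω := by
  apply csSup_le_csSup
  · rw [runMax_set_eq]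
    exact Finset.bddAbove _
  · exact ⟨X 1 1 ω, 1, 1, le_rfl, hm1, le_rfl, hj1, rfl⟩
  · rintro y ⟨k, n, hk1, hk2, hn1, hn2, rfl⟩
    exact ⟨k, n, hk1, hk2.trans hm, hn1, hn2.trans hj, rfl⟩

private lemma exists_pow_nat (m : ℕ) (hm : 1 ≤ m) : ∃ i : ℕ, 2 ^ i ≤ m ∧ m ≤ 2 ^ (i + 1) := by
  rcases eq_or_lt_of_le hm with h | h
  · exact ⟨0, by omega, by omega⟩
  · refine ⟨Nat.clog 2 m - 1, ?_, ?_⟩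
    · exact (Nat.pow_pred_clog_lt_self one_lt_two h).le
    · have hc1 : 1 ≤ Nat.clog 2 m := Nat.clog_pos one_lt_two h
      have heq : Nat.clog 2 m - 1 + 1 = Nat.clog 2 m := by omega
      rw [heq]
      exact Nat.le_pow_clog one_lt_two m

private lemma chernoff_aux {Ω : Type*} [MeasurableSpace Ω] {P : Measure Ω}
    [IsProbabilityMeasure P] {φ : ℝ → ℝ} (hφ0 : φ 0 = 0) {X : Ω → ℝ} {a : ℝ}
    (ha : PhiMGF φ P X a) {z y : ℝ} (hz : 0 ≤ z) (hy : 0 ≤ y) :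
    P {ω | z < X ω} ≤ ENNReal.ofReal (Real.exp (φ y - z / a * y)) := by
  obtain ⟨hapos, hmgf⟩ := ha
  rcases eq_or_lt_of_le hy with h0 | hypos
  · rw [← h0]
    simp only [mul_zero, hφ0, sub_zero, Real.exp_zero, ENNReal.ofReal_one]
    exact prob_le_one
  · set t := y / a with ht
    have htpos : 0 < t := div_pos hypos hapos
    obtain ⟨hintg, hle⟩ := hmgf t
    have hsubset : {ω | z < X ω} ⊆ {ω | Real.exp (t * z) ≤ Real.exp (t * X ω)} := by
      intro ω hω
      exact le_of_lt (Real.exp_lt_exp.2 (mul_lt_mul_of_pos_left hω htpos))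
    have hmar := mul_meas_ge_le_integral_of_nonneg (μ := P)
      (ae_of_all _ fun ω => (Real.exp_pos (t * X ω)).le) hintg (Real.exp (t * z))
    have hat : a * t = y := by
      rw [ht]; field_simp
    rw [hat] at hle
    have h1 : (P {ω | Real.exp (t * z) ≤ Real.exp (t * X ω)}).toReal ≤
        Real.exp (φ y - t * z) := by
      rw [Real.exp_sub, le_div_iff₀ (Real.exp_pos _)]
      calc (P {ω | Real.exp (t * z) ≤ Real.exp (t * X ω)}).toReal * Real.exp (t * z)
          = Real.exp (t * z) * (P {ω | Real.exp (t * z) ≤ Real.exp (t * X ω)}).toReal := by ring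
        _ ≤ ∫ ω, Real.exp (t * X ω) ∂P := hmar
        _ ≤ Real.exp (φ y) := hle
    calc P {ω | z < X ω} ≤ P {ω | Real.exp (t * z) ≤ Real.exp (t * X ω)} :=
        measure_mono hsubset
      _ = ENNReal.ofReal ((P {ω | Real.exp (t * z) ≤ Real.exp (t * X ω)}).toReal) :=
        (ENNReal.ofReal_toReal (measure_ne_top _ _)).symm
      _ ≤ ENNReal.ofReal (Real.exp (φ y - t * z)) := ENNReal.ofReal_le_ofReal h1
      _ = ENNReal.ofReal (Real.exp (φ y - z / a * y)) := by
        congr 1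
        rw [ht]
        ring_nf

private lemma chernoff {Ω : Type*} [MeasurableSpace Ω] {P : Measure Ω}
    [IsProbabilityMeasure P] {φ ψ : ℝ → ℝ} (hφ : IsOrliczN φ) (hψ : IsYoungFenchel φ ψ)
    {X : Ω → ℝ} {a : ℝ} (ha : PhiMGF φ P X a) {z : ℝ} (hz : 0 ≤ z) :
    P {ω | z < X ω} ≤ ENNReal.ofReal (Real.exp (-ψ (z / a))) := by
  set x := z / a with hx
  have hx0 : 0 ≤ x := div_nonneg hz ha.1.le
  have key : ∀ n : ℕ, P {ω | z < X ω} ≤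
      ENNReal.ofReal (Real.exp (-ψ x + 1 / (n + 1))) := by
    intro n
    have hlt : ψ x - 1 / ((n : ℝ) + 1) < ψ x := by
      have : (0:ℝ) < 1 / ((n : ℝ) + 1) := by positivity
      linarith
    obtain ⟨cval, hcmem, hθc, -⟩ := (hψ x).exists_between hlt
    obtain ⟨y, hyv⟩ := hcmem
    have habs : cval ≤ x * |y| - φ |y| := by
      rcases abs_cases y with ⟨h1, _⟩ | ⟨h1, h2⟩
      · rw [h1, ← hyv]
      · rw [h1]
        have heven : φ (-y) = φ y := hφ.even y
        have hxy : x * y ≤ x * (-y) := by nlinarith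
        rw [heven, hyv]
        linarith
    have hbound := chernoff_aux hφ.map_zero ha hz (abs_nonneg y)
    refine (hbound.trans (ENNReal.ofReal_le_ofReal (Real.exp_le_exp.2 ?_)))
    rw [← hx]
    linarith
  have htend : Tendsto (fun n : ℕ => ENNReal.ofReal (Real.exp (-ψ x + 1 / (n + 1))))
      atTop (nhds (ENNReal.ofReal (Real.exp (-ψ x)))) := by
    have h1 : Tendsto (fun n : ℕ => -ψ x + 1 / ((n : ℝ) + 1)) atTop (nhds (-ψ x + 0)) :=
      tendsto_const_nhds.add tendsto_one_div_add_atTop_nhds_zero_nat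
    rw [add_zero] at h1
    exact (ENNReal.continuous_ofReal.tendsto _).comp ((Real.continuous_exp.tendsto _).comp h1)
  exact ge_of_tendsto' htend key

private lemma tail_bound {Ω : Type*} [MeasurableSpace Ω] {P : Measure Ω}
    [IsProbabilityMeasure P] {φ ψ : ℝ → ℝ} (hφ : IsOrliczN φ) (hψ : IsYoungFenchel φ ψ)
    (hψmono : ∀ s t : ℝ, 0 ≤ s → s ≤ t → ψ s ≤ ψ t)
    {X : Ω → ℝ} (hsubX : IsPhiSubGaussian φ P X) (hτX : tauPhi φ P X ≤ 1)
    {w z : ℝ} (hw : 0 < w) (hwz : w < z) :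
    P {ω | z < X ω} ≤ ENNReal.ofReal (Real.exp (-ψ w)) := by
  obtain ⟨-, -, a₀, ha₀⟩ := hsubX
  have hne : {a | PhiMGF φ P X a}.Nonempty := ⟨a₀, ha₀⟩
  have hzw : 1 < z / w := (one_lt_div hw).2 hwz
  have hlt : sInf {a | PhiMGF φ P X a} < z / w := lt_of_le_of_lt hτX hzw
  obtain ⟨a, haS, halt⟩ := exists_lt_of_csInf_lt hne hlt
  have hz0 : 0 ≤ z := (hw.trans hwz).le
  have hwa : w ≤ z / a := by
    rw [le_div_iff₀ haS.1]
    rw [lt_div_iff₀ hw] at halt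
    nlinarith
  refine (chernoff hφ hψ haS hz0).trans
    (ENNReal.ofReal_le_ofReal (Real.exp_le_exp.2 (neg_le_neg ?_)))
  exact hψmono w (z / a) hw.le hwa

private lemma ennreal_tsum_le_shift (f : ℕ → ℝ≥0∞) (k : ℕ) :
    ∑' p, f p ≤ ∑ i ∈ Finset.range k, f i + ∑' p, f (p + k) := by
  rw [ENNReal.tsum_eq_iSup_sum]
  refine iSup_le fun s => ?_
  rw [← Finset.sum_filter_add_sum_filter_not s (fun p => p < k)]
  refine add_le_add ?_ ?_
  · refine Finset.sum_le_sum_of_subset ?_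
    intro p hp
    simp only [Finset.mem_filter, Finset.mem_range] at hp ⊢
    exact hp.2
  · have heq : ∑ p ∈ s.filter (fun p => ¬ p < k), f p
        = ∑ q ∈ (s.filter (fun p => ¬ p < k)).image (fun p => p - k), f (q + k) := by
      rw [Finset.sum_image ?_]
      · refine Finset.sum_congr rfl fun p hp => ?_
        simp only [Finset.mem_filter] at hp
        rw [Nat.sub_add_cancel (by omega)]
      · intro a ha b hb hab
        simp only [Finset.coe_filter, Finset.mem_coe, Finset.mem_filter, Set.mem_setOf_eq] at ha hb hab
        omega
    rw [heq]
    exact ENNReal.sum_le_tsum _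

set_option maxHeartbeats 1000000 in
private lemma tsum_exp_ne_top {ψ ψinv q : ℝ → ℝ}
    (hq_mono : MonotoneOn q (Set.Ici 0)) (hq_nonneg : ∀ x, 0 ≤ x → 0 ≤ q x)
    (hψq : ∀ x, 0 ≤ x → ψ x = ∫ t in (0:ℝ)..x, q t)
    (hψinv : ∀ x, 0 ≤ x → 0 ≤ ψinv x ∧ ψ (ψinv x) = x)
    {η : ℝ} (hη : 0 < η)
    (hI : ∫⁻ x in Set.Ioi (0:ℝ),
        ENNReal.ofReal (ψ x * q x * Real.exp (-(η * q x))) < ⊤) :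
    ∑' p : ℕ, ENNReal.ofReal (Real.exp (-(η * q (ψinv ((p : ℝ) * Real.log 2))))) ≠ ⊤ := by
  have hc : (0:ℝ) < Real.log 2 := Real.log_pos one_lt_two
  set c := Real.log 2 with hcdef
  set t : ℕ → ℝ := fun p => ψinv ((p : ℝ) * c) with htdef
  have htn : ∀ p : ℕ, 0 ≤ t p := fun p => (hψinv _ (by positivity)).1
  have hψt : ∀ p : ℕ, ψ (t p) = (p : ℝ) * c := fun p => (hψinv _ (by positivity)).2
  have hψm := psi_mono hq_mono hq_nonneg hψq
  have htmono : ∀ p p' : ℕ, p ≤ p' → t p ≤ t p' := by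
    intro p p' h
    exact psiinv_mono hq_mono hq_nonneg hψq hψinv _ _ (by positivity)
      (mul_le_mul_of_nonneg_right (Nat.cast_le.2 h) hc.le)
  set Q : ℕ → ℝ := fun p => q (t p) with hQdef
  set f : ℝ → ℝ≥0∞ := fun x => ENNReal.ofReal (ψ x * q x * Real.exp (-(η * q x))) with hfdef
  have step1 : ∀ p : ℕ,
      ENNReal.ofReal (c * Real.exp (-(η * Q (p + 2)))) * ENNReal.ofReal c ≤
        ∫⁻ x in Set.Ioc (t (p + 1)) (t (p + 2)), f x := by
    intro p
    have h12 : t (p + 1) ≤ t (p + 2) := htmono _ _ (by omega)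
    have hKnn : (0:ℝ) ≤ c * Real.exp (-(η * Q (p + 2))) := by positivity
    have hqint : IntervalIntegrable q volume (t (p + 1)) (t (p + 2)) :=
      qInt hq_mono (htn _) (htn _)
    have hIoc : IntegrableOn q (Set.Ioc (t (p + 1)) (t (p + 2))) volume :=
      (intervalIntegrable_iff_integrableOn_Ioc_of_le h12).1 hqint
    have hqI : ∫ x in Set.Ioc (t (p + 1)) (t (p + 2)), q x = c := by
      rw [← intervalIntegral.integral_of_le h12]
      have hps := psi_sub hq_mono hψq (htn (p + 1)) h12
      rw [← hps, hψt, hψt]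
      push_cast
      ring
    have hlq : ∫⁻ x in Set.Ioc (t (p + 1)) (t (p + 2)), ENNReal.ofReal (q x) =
        ENNReal.ofReal c := by
      rw [← hqI]
      refine (ofReal_integral_eq_lintegral_ofReal hIoc ?_).symm
      exact ae_restrict_of_forall_mem measurableSet_Ioc
        (fun x hx => hq_nonneg x ((htn _).trans hx.1.le))
    calc ENNReal.ofReal (c * Real.exp (-(η * Q (p + 2)))) * ENNReal.ofReal c
        = ∫⁻ x in Set.Ioc (t (p + 1)) (t (p + 2)),
            ENNReal.ofReal (c * Real.exp (-(η * Q (p + 2)))) * ENNReal.ofReal (q x) := by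
          rw [lintegral_const_mul' _ _ ENNReal.ofReal_ne_top, hlq]
      _ ≤ ∫⁻ x in Set.Ioc (t (p + 1)) (t (p + 2)), f x := by
          refine lintegral_mono_ae (ae_restrict_of_forall_mem measurableSet_Ioc
            (fun x hx => ?_))
          have hx0 : (0:ℝ) ≤ x := (htn _).trans hx.1.le
          rw [← ENNReal.ofReal_mul hKnn]
          apply ENNReal.ofReal_le_ofReal
          have e1 : c ≤ ψ x := by
            have h1 : ψ (t (p + 1)) ≤ ψ x := hψm _ _ (htn _) hx.1.le
            rw [hψt] at h1
            have hp1 : (0:ℝ) ≤ (p:ℝ) := Nat.cast_nonneg p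
            push_cast at h1
            nlinarith
          have e2 : Real.exp (-(η * Q (p + 2))) ≤ Real.exp (-(η * q x)) := by
            apply Real.exp_le_exp.2
            have hqle : q x ≤ Q (p + 2) := hq_mono (Set.mem_Ici.2 hx0)
              (Set.mem_Ici.2 (htn _)) hx.2
            nlinarith
          have e3 : 0 ≤ q x := hq_nonneg x hx0
          calc c * Real.exp (-(η * Q (p + 2))) * q x
              ≤ ψ x * Real.exp (-(η * q x)) * q x :=
                mul_le_mul_of_nonneg_right
                  (mul_le_mul e1 e2 (Real.exp_pos _).le (hc.le.trans e1)) e3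
            _ = ψ x * q x * Real.exp (-(η * q x)) := by ring
  have hdisj : Pairwise (Function.onFun Disjoint
      (fun p : ℕ => Set.Ioc (t (p + 1)) (t (p + 2)))) := by
    intro p p' hne
    rw [Function.onFun, Set.Ioc_disjoint_Ioc]
    rcases hne.lt_or_gt with h | h
    · exact le_trans (min_le_left _ _) (le_trans (htmono _ _ (by omega)) (le_max_right _ _))
    · exact le_trans (min_le_right _ _) (le_trans (htmono _ _ (by omega)) (le_max_left _ _))
  have hsub : (⋃ p : ℕ, Set.Ioc (t (p + 1)) (t (p + 2))) ⊆ Set.Ioi (0:ℝ) := by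
    intro x hx
    simp only [Set.mem_iUnion] at hx
    obtain ⟨p, hp⟩ := hx
    exact Set.mem_Ioi.2 (lt_of_le_of_lt (htn (p + 1)) hp.1)
  have hsum2 : ∑' p : ℕ,
      (ENNReal.ofReal (c * Real.exp (-(η * Q (p + 2)))) * ENNReal.ofReal c) ≠ ⊤ := by
    refine ne_top_of_le_ne_top hI.ne ?_
    calc ∑' p : ℕ, (ENNReal.ofReal (c * Real.exp (-(η * Q (p + 2)))) * ENNReal.ofReal c)
        ≤ ∑' p : ℕ, ∫⁻ x in Set.Ioc (t (p + 1)) (t (p + 2)), f x :=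
          ENNReal.tsum_le_tsum step1
      _ = ∫⁻ x in ⋃ p : ℕ, Set.Ioc (t (p + 1)) (t (p + 2)), f x :=
          (lintegral_iUnion (fun p => measurableSet_Ioc) hdisj f).symm
      _ ≤ ∫⁻ x in Set.Ioi (0:ℝ), f x := lintegral_mono_set hsub
  have hrw : ∀ p : ℕ, ENNReal.ofReal (c * Real.exp (-(η * Q (p + 2)))) * ENNReal.ofReal c
      = (ENNReal.ofReal c * ENNReal.ofReal c) *
          ENNReal.ofReal (Real.exp (-(η * Q (p + 2)))) := by
    intro p
    rw [ENNReal.ofReal_mul hc.le]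
    ring
  rw [tsum_congr hrw, ENNReal.tsum_mul_left] at hsum2
  have hK0 : (ENNReal.ofReal c * ENNReal.ofReal c) ≠ 0 :=
    mul_ne_zero (ENNReal.ofReal_pos.2 hc).ne' (ENNReal.ofReal_pos.2 hc).ne'
  have h4 : ∑' p : ℕ, ENNReal.ofReal (Real.exp (-(η * Q (p + 2)))) ≠ ⊤ := by
    intro htop
    rw [htop, ENNReal.mul_top hK0] at hsum2
    exact hsum2 rfl
  show ∑' p : ℕ, ENNReal.ofReal (Real.exp (-(η * Q p))) ≠ ⊤
  refine ne_top_of_le_ne_top ?_ (ennreal_tsum_le_shift (fun p => ENNReal.ofReal (Real.exp (-(η * Q p)))) 2)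
  rw [Finset.sum_range_succ, Finset.sum_range_one]
  exact ENNReal.add_ne_top.2 ⟨ENNReal.add_ne_top.2 ⟨ENNReal.ofReal_ne_top,
    ENNReal.ofReal_ne_top⟩, h4⟩

set_option maxHeartbeats 1000000 in
/-- Corollary 1: for a double array of `φ`-subgaussian random variables
with `sup_{k,n} τ_φ(X_{k,n}) ≤ 1`, if `∫₀^∞ ψ(x) q_φ(x) exp(-ε q_φ(x)) dx < ∞` for all small
`ε > 0`, then `(max_{1≤k≤m,1≤n≤j} X_{k,n} - ψ⁻¹(ln(mj)))⁺ → 0` a.s. as `m ∨ j → ∞`. -/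
theorem runMax_pos_part_tendsto_zero_of_tau_le_one
    {Ω : Type*} [MeasurableSpace Ω] (P : Measure Ω) [IsProbabilityMeasure P]
    (φ ψ ψinv q : ℝ → ℝ) (hφ : IsOrliczN φ) (hψ : IsYoungFenchel φ ψ)
    (hq_mono : MonotoneOn q (Set.Ici 0)) (hq_nonneg : ∀ x, 0 ≤ x → 0 ≤ q x)
    (hψq : ∀ x, 0 ≤ x → ψ x = ∫ t in (0:ℝ)..x, q t)
    (hψinv : ∀ x, 0 ≤ x → 0 ≤ ψinv x ∧ ψ (ψinv x) = x)
    (X : ℕ → ℕ → Ω → ℝ)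
    (hsub : ∀ k n : ℕ, 1 ≤ k → 1 ≤ n → IsPhiSubGaussian φ P (X k n))
    (hτ : ∀ k n : ℕ, 1 ≤ k → 1 ≤ n → tauPhi φ P (X k n) ≤ 1)
    (hint : ∃ ε₀ > (0:ℝ), ∀ ε : ℝ, 0 < ε → ε ≤ ε₀ →
      ∫⁻ x in Set.Ioi (0:ℝ),
        ENNReal.ofReal (ψ x * q x * Real.exp (-(ε * q x))) < ⊤) :
    ∀ᵐ ω ∂P, TendstoMaxIdx
      (fun m j => max (runMax X m j ω - ψinv (Real.log ((m * j : ℕ) : ℝ))) 0) 0 := by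
  obtain ⟨ε₀, hε₀pos, hI⟩ := hint
  have hc : (0:ℝ) < Real.log 2 := Real.log_pos one_lt_two
  set c := Real.log 2 with hcdef
  have hψm := psi_mono hq_mono hq_nonneg hψq
  have hψinvm := psiinv_mono hq_mono hq_nonneg hψq hψinv
  -- the key a.e. statement for a fixed ε
  have key : ∀ ε : ℝ, 0 < ε → ε ≤ 4 * ε₀ → ∀ᵐ ω ∂P, ∃ N : ℕ, ∀ m j : ℕ,
      1 ≤ m → 1 ≤ j → N ≤ max m j →
      max (runMax X m j ω - ψinv (Real.log ((m * j : ℕ) : ℝ))) 0 ≤ ε := by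
    intro ε hε hεε₀
    set η := ε / 4 with hηdef
    have hηpos : 0 < η := by positivity
    have hηε₀ : η ≤ ε₀ := by rw [hηdef]; linarith
    set Q : ℕ → ℝ := fun p => q (ψinv ((p : ℝ) * c)) with hQdef
    have hQnn : ∀ p : ℕ, 0 ≤ Q p := fun p => hq_nonneg _ (hψinv _ (by positivity)).1
    have hQmono : ∀ p p' : ℕ, p ≤ p' → Q p ≤ Q p' := by
      intro p p' h
      refine hq_mono (Set.mem_Ici.2 (hψinv _ (by positivity)).1)
        (Set.mem_Ici.2 (hψinv _ (by positivity)).1) ?_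
      exact hψinvm _ _ (by positivity) (mul_le_mul_of_nonneg_right (Nat.cast_le.2 h) hc.le)
    -- the events
    set A : ℕ × ℕ → Set Ω := fun il =>
      {ω | ψinv (((il.1 + il.2 : ℕ) : ℝ) * c) + ε <
        runMax X (2 ^ (il.1 + 1)) (2 ^ (il.2 + 1)) ω} with hAdef
    -- probability bound for each event
    have hA : ∀ i l : ℕ, P (A (i, l)) ≤
        ENNReal.ofReal 4 * ENNReal.ofReal (Real.exp (-(η * Q i))) *
          ENNReal.ofReal (Real.exp (-(η * Q l))) := by
      intro i l
      set L : ℝ := ((i + l : ℕ) : ℝ) * c with hLdef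
      have hL0 : 0 ≤ L := by positivity
      set u := ψinv L with hudef
      have hu0 : 0 ≤ u := (hψinv L hL0).1
      have hwz : u + ε / 2 < u + ε := by linarith
      have hw0 : 0 < u + ε / 2 := by linarith
      -- tail bound for an individual variable
      have htail : ∀ k n : ℕ, 1 ≤ k → 1 ≤ n → P {ω | u + ε < X k n ω} ≤
          ENNReal.ofReal (Real.exp (-(L + ε / 2 * Q (i + l)))) := by
        intro k n hk hn
        refine (tail_bound hφ hψ hψm (hsub k n hk hn) (hτ k n hk hn) hw0 hwz).trans ?_
        apply ENNReal.ofReal_le_ofReal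
        apply Real.exp_le_exp.2
        have hincr := psi_incr hq_mono hψq hu0 (by linarith : (0:ℝ) ≤ ε / 2)
        rw [(hψinv L hL0).2] at hincr
        have hQeq : q u = Q (i + l) := by rw [hQdef, hudef, hLdef]
        rw [hQeq] at hincr
        linarith
      -- inclusion in a finite union
      have hincl : A (i, l) ⊆ ⋃ k ∈ Finset.Icc 1 (2 ^ (i + 1)),
          ⋃ n ∈ Finset.Icc 1 (2 ^ (l + 1)), {ω | u + ε < X k n ω} := by
        intro ω hω
        simp only [hAdef, Set.mem_setOf_eq] at hω
        rw [← hLdef, ← hudef] at hω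
        unfold runMax at hω
        have hne : {y | ∃ k n, 1 ≤ k ∧ k ≤ 2 ^ (i + 1) ∧ 1 ≤ n ∧ n ≤ 2 ^ (l + 1) ∧
            y = X k n ω}.Nonempty :=
          ⟨X 1 1 ω, 1, 1, le_rfl, Nat.one_le_two_pow, le_rfl, Nat.one_le_two_pow, rfl⟩
        obtain ⟨y, hyS, hzy⟩ := exists_lt_of_lt_csSup hne hω
        obtain ⟨k, n, hk1, hk2, hn1, hn2, rfl⟩ := hyS
        refine Set.mem_iUnion₂.2 ⟨k, Finset.mem_Icc.2 ⟨hk1, hk2⟩, ?_⟩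
        exact Set.mem_iUnion₂.2 ⟨n, Finset.mem_Icc.2 ⟨hn1, hn2⟩, hzy⟩
      -- union bound
      have hub : P (A (i, l)) ≤ ((2 ^ (i + 1) * 2 ^ (l + 1) : ℕ) : ℝ≥0∞) *
          ENNReal.ofReal (Real.exp (-(L + ε / 2 * Q (i + l)))) := by
        calc P (A (i, l)) ≤ P (⋃ k ∈ Finset.Icc 1 (2 ^ (i + 1)),
            ⋃ n ∈ Finset.Icc 1 (2 ^ (l + 1)), {ω | u + ε < X k n ω}) := measure_mono hincl
          _ ≤ ∑ k ∈ Finset.Icc 1 (2 ^ (i + 1)), P (⋃ n ∈ Finset.Icc 1 (2 ^ (l + 1)),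
              {ω | u + ε < X k n ω}) := measure_biUnion_finset_le _ _
          _ ≤ ∑ k ∈ Finset.Icc 1 (2 ^ (i + 1)), ∑ n ∈ Finset.Icc 1 (2 ^ (l + 1)),
              P {ω | u + ε < X k n ω} :=
            Finset.sum_le_sum fun k _ => measure_biUnion_finset_le _ _
          _ ≤ ∑ k ∈ Finset.Icc 1 (2 ^ (i + 1)), ∑ n ∈ Finset.Icc 1 (2 ^ (l + 1)),
              ENNReal.ofReal (Real.exp (-(L + ε / 2 * Q (i + l)))) := by
            refine Finset.sum_le_sum fun k hk => Finset.sum_le_sum fun n hn => ?_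
            exact htail k n (Finset.mem_Icc.1 hk).1 (Finset.mem_Icc.1 hn).1
          _ = ((2 ^ (i + 1) * 2 ^ (l + 1) : ℕ) : ℝ≥0∞) *
              ENNReal.ofReal (Real.exp (-(L + ε / 2 * Q (i + l)))) := by
            simp only [Finset.sum_const, Nat.card_Icc, Nat.add_sub_cancel, nsmul_eq_mul]
            push_cast
            ring
      refine hub.trans ?_
      rw [← ENNReal.ofReal_natCast (2 ^ (i + 1) * 2 ^ (l + 1)),
        ← ENNReal.ofReal_mul (by positivity), ← ENNReal.ofReal_mul (by norm_num),
        ← ENNReal.ofReal_mul (by positivity)]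
      apply ENNReal.ofReal_le_ofReal
      have hcast : ((2 ^ (i + 1) * 2 ^ (l + 1) : ℕ) : ℝ) = 4 * 2 ^ (i + l) := by
        push_cast
        ring
      have hexpL : Real.exp L = 2 ^ (i + l) := by
        rw [hLdef, Real.exp_nat_mul, hcdef, Real.exp_log (by norm_num : (0:ℝ) < 2)]
      have hQ1 : η * Q i + η * Q l ≤ ε / 2 * Q (i + l) := by
        have h1 := hQmono i (i + l) (Nat.le_add_right _ _)
        have h2 := hQmono l (i + l) (Nat.le_add_left _ _)
        have h3 := hQnn (i + l)
        rw [hηdef]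
        nlinarith
      have hpow : (0:ℝ) < 2 ^ (i + l) := by positivity
      calc ((2 ^ (i + 1) * 2 ^ (l + 1) : ℕ) : ℝ) * Real.exp (-(L + ε / 2 * Q (i + l)))
          = 4 * 2 ^ (i + l) * (Real.exp (-L) * Real.exp (-(ε / 2 * Q (i + l)))) := by
            rw [hcast, ← Real.exp_add]
            ring_nf
        _ = 4 * Real.exp (-(ε / 2 * Q (i + l))) := by
            rw [Real.exp_neg, hexpL]
            field_simp
        _ ≤ 4 * (Real.exp (-(η * Q i)) * Real.exp (-(η * Q l))) := by
            rw [← Real.exp_add]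
            have : -(ε / 2 * Q (i + l)) ≤ -(η * Q i) + -(η * Q l) := by linarith
            nlinarith [Real.exp_le_exp.2 this]
        _ = 4 * Real.exp (-(η * Q i)) * Real.exp (-(η * Q l)) := by ring
    -- summability of the probabilities
    have hTfin : ∑' p : ℕ, ENNReal.ofReal (Real.exp (-(η * Q p))) ≠ ⊤ :=
      tsum_exp_ne_top hq_mono hq_nonneg hψq hψinv hηpos (hI η hηpos hηε₀)
    have hsumA : ∑' il : ℕ × ℕ, P (A il) ≠ ⊤ := by
      refine ne_top_of_le_ne_top ?_ (ENNReal.tsum_le_tsum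
        (fun il : ℕ × ℕ => (by exact hA il.1 il.2 :
          P (A il) ≤ ENNReal.ofReal 4 * ENNReal.ofReal (Real.exp (-(η * Q il.1))) *
            ENNReal.ofReal (Real.exp (-(η * Q il.2))))))
      rw [ENNReal.tsum_prod']
      have h1 : ∀ i : ℕ, ∑' l : ℕ, ENNReal.ofReal 4 *
          ENNReal.ofReal (Real.exp (-(η * Q i))) * ENNReal.ofReal (Real.exp (-(η * Q l))) =
          ENNReal.ofReal 4 * ENNReal.ofReal (Real.exp (-(η * Q i))) *
            ∑' l : ℕ, ENNReal.ofReal (Real.exp (-(η * Q l))) :=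
        fun i => ENNReal.tsum_mul_left
      rw [tsum_congr h1]
      have h2 : ∀ i : ℕ, ENNReal.ofReal 4 * ENNReal.ofReal (Real.exp (-(η * Q i))) *
          (∑' l : ℕ, ENNReal.ofReal (Real.exp (-(η * Q l)))) =
          (ENNReal.ofReal 4 * ∑' l : ℕ, ENNReal.ofReal (Real.exp (-(η * Q l)))) *
            ENNReal.ofReal (Real.exp (-(η * Q i))) := fun i => by ring
      rw [tsum_congr h2, ENNReal.tsum_mul_left]
      exact ENNReal.mul_ne_top (ENNReal.mul_ne_top ENNReal.ofReal_ne_top hTfin) hTfin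
    -- Borel–Cantelli
    filter_upwards [ae_finite_setOf_mem hsumA] with ω hfin
    set M := hfin.toFinset.sup (fun il => max il.1 il.2) with hMdef
    refine ⟨2 ^ (M + 2), ?_⟩
    intro m j hm hj hmax
    obtain ⟨i, h2i, h2i'⟩ := exists_pow_nat m hm
    obtain ⟨l, h2l, h2l'⟩ := exists_pow_nat j hj
    have hnotin : ω ∉ A (i, l) := by
      intro hmem
      have hmem' : (i, l) ∈ hfin.toFinset := hfin.mem_toFinset.2 hmem
      have hle : max i l ≤ M := Finset.le_sup (f := fun il : ℕ × ℕ => max il.1 il.2) hmem'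
      -- derive a contradiction with hmax
      have hcases : 2 ^ (M + 2) ≤ m ∨ 2 ^ (M + 2) ≤ j := by
        rcases le_total m j with h | h
        · right; omega
        · left; omega
      rcases hcases with h | h
      · have : 2 ^ (M + 2) ≤ 2 ^ (i + 1) := h.trans h2i'
        have := (Nat.pow_le_pow_iff_right (by norm_num : 1 < 2)).1 this
        omega
      · have : 2 ^ (M + 2) ≤ 2 ^ (l + 1) := h.trans h2l'
        have := (Nat.pow_le_pow_iff_right (by norm_num : 1 < 2)).1 this
        omega
    simp only [hAdef, Set.mem_setOf_eq, not_lt] at hnotin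
    have hmono1 : runMax X m j ω ≤ runMax X (2 ^ (i + 1)) (2 ^ (l + 1)) ω :=
      runMax_le_runMax X hm hj h2i' h2l' ω
    have hlog : ((i + l : ℕ) : ℝ) * c ≤ Real.log ((m * j : ℕ) : ℝ) := by
      have h1 : (2:ℝ) ^ (i + l) ≤ ((m * j : ℕ) : ℝ) := by
        push_cast
        calc (2:ℝ) ^ (i + l) = 2 ^ i * 2 ^ l := pow_add 2 i l
          _ ≤ (m : ℝ) * (j : ℝ) := by
            have hi' : (2:ℝ) ^ i ≤ (m : ℝ) := by
              exact_mod_cast Nat.cast_le.2 h2i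
            have hl' : (2:ℝ) ^ l ≤ (j : ℝ) := by
              exact_mod_cast Nat.cast_le.2 h2l
            have : (0:ℝ) ≤ 2 ^ i := by positivity
            nlinarith
      calc ((i + l : ℕ) : ℝ) * c = Real.log ((2:ℝ) ^ (i + l)) := by
            rw [Real.log_pow]
        _ ≤ Real.log ((m * j : ℕ) : ℝ) := Real.log_le_log (by positivity) h1
    have hψinvle : ψinv (((i + l : ℕ) : ℝ) * c) ≤ ψinv (Real.log ((m * j : ℕ) : ℝ)) :=
      hψinvm _ _ (by positivity) hlog
    refine max_le ?_ hε.le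
    linarith
  -- conclude: intersect over a sequence of ε's
  have hεn : ∀ n : ℕ, 0 < min (1 / ((n : ℝ) + 1)) (4 * ε₀) := by
    intro n
    apply lt_min (by positivity) (by linarith)
  have hae := ae_all_iff.2 (fun n : ℕ =>
    key (min (1 / ((n : ℝ) + 1)) (4 * ε₀)) (hεn n) (min_le_right _ _))
  filter_upwards [hae] with ω hω
  intro ε' hε'
  obtain ⟨n, hn⟩ := exists_nat_one_div_lt hε'
  obtain ⟨N, hN⟩ := hω n
  refine ⟨N, fun m j hm hj hmax => ?_⟩
  have hb := hN m j hm hj hmax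
  rw [sub_zero, abs_of_nonneg (le_max_right _ _)]
  calc max (runMax X m j ω - ψinv (Real.log ((m * j : ℕ) : ℝ))) 0
      ≤ min (1 / ((n : ℝ) + 1)) (4 * ε₀) := hb
    _ ≤ 1 / ((n : ℝ) + 1) := min_le_left _ _
    _ < ε' := hn
end

section
/- Let {X_{k,n} : k,n ≥ 1} be a double array of independent φ-subgaussian random variables with sup_{k,n ∈ ℕ} τ_φ(X_{k,n}) ≤ 1. Let κ be a positive increasing differentiable function on (0,∞) whose derivative r = κ′ is non-decreasing for x > 0, and suppose ψ(x) − κ(x) ≥ C₀(x) for all x > 0 for some function C₀. Assume there exists C > 0 such that for every k,n ≥ 1 and all x > 0, P(X_{k,n} < x) ≤ exp(−C exp(−κ(x))). Suppose there exist constants A > 0 and ε₀ > 0 such that for every ε ∈ (0, ε₀]: (a) ∫_A^∞ exp(−(C y / 2) exp(−κ(ψ^{−1}(ln y) − ε))) dy < +∞, and (b) ∫_A^∞ ψ(y) q_φ(y) exp(ψ(y) − (C/2) exp(C₀(y) + ε r(y − ε))) dy < +∞. Then (max_{1 ≤ k ≤ m, 1 ≤ n ≤ j} X_{k,n} − ψ^{−1}(ln(mj)))⁻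 → 0 almost surely as m ∨ j → ∞, where u⁻ = max(−u, 0). -/
open MeasureTheory Real Filter Set

lemma aux_tsum_antidiag (G : ℕ → ENNReal) (S : ℕ) :
    ∑' p : {q : ℕ × ℕ // S ≤ q.1 + q.2}, G (p.1.1 + p.1.2) ≤
      ∑' i : ℕ, ((i : ENNReal) + S + 1) * G (i + S) := by
  rw [ENNReal.tsum_eq_iSup_sum]
  refine iSup_le fun F => ?_
  classical
  have hinj : Function.Injective (Subtype.val : {q : ℕ × ℕ // S ≤ q.1 + q.2} → ℕ × ℕ) :=
    Subtype.val_injective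
  set F' : Finset (ℕ × ℕ) := F.image Subtype.val with hF'
  have hsum_eq : ∑ p ∈ F, G (p.1.1 + p.1.2) = ∑ p ∈ F', G (p.1 + p.2) := by
    rw [hF', Finset.sum_image (fun x _ y _ h => hinj h)]
  rw [hsum_eq]
  set M : ℕ := F'.sup (fun p => p.1 + p.2) with hM
  have hsub : F' ⊆ (Finset.range (M + 1)).biUnion
      (fun i => Finset.HasAntidiagonal.antidiagonal (i + S)) := by
    intro p hp
    have hpS : S ≤ p.1 + p.2 := by
      obtain ⟨x, hx, rfl⟩ := Finset.mem_image.1 hp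
      exact x.2
    have hpM : p.1 + p.2 ≤ M := Finset.le_sup (f := fun p : ℕ × ℕ => p.1 + p.2) hp
    refine Finset.mem_biUnion.2 ⟨p.1 + p.2 - S, ?_, ?_⟩
    · exact Finset.mem_range.2 (by omega)
    · rw [Finset.HasAntidiagonal.mem_antidiagonal]; omega
  have hdisj : (↑(Finset.range (M + 1)) : Set ℕ).PairwiseDisjoint
      (fun i => Finset.HasAntidiagonal.antidiagonal (i + S)) := by
    intro i _ j _ hij
    refine Finset.disjoint_left.2 fun p hp hp' => ?_
    rw [Finset.HasAntidiagonal.mem_antidiagonal] at hp hp'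
    omega
  calc ∑ p ∈ F', G (p.1 + p.2)
      ≤ ∑ p ∈ (Finset.range (M + 1)).biUnion (fun i => Finset.HasAntidiagonal.antidiagonal (i + S)),
          G (p.1 + p.2) := Finset.sum_le_sum_of_subset hsub
    _ = ∑ i ∈ Finset.range (M + 1), ∑ p ∈ Finset.HasAntidiagonal.antidiagonal (i + S), G (p.1 + p.2) :=
        Finset.sum_biUnion hdisj
    _ = ∑ i ∈ Finset.range (M + 1), ((i : ENNReal) + S + 1) * G (i + S) := by
        refine Finset.sum_congr rfl fun i _ => ?_
        have : ∀ p ∈ Finset.HasAntidiagonal.antidiagonal (i + S), G (p.1 + p.2) = G (i + S) := by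
          intro p hp; rw [Finset.HasAntidiagonal.mem_antidiagonal.1 hp]
        rw [Finset.sum_congr rfl this, Finset.sum_const, Finset.Nat.card_antidiagonal]
        simp only [nsmul_eq_mul]
        push_cast
        ring_nf
    _ ≤ ∑' i : ℕ, ((i : ENNReal) + S + 1) * G (i + S) := ENNReal.sum_le_tsum _

lemma aux_borel_cantelli {Ω : Type*} [MeasurableSpace Ω] (μ : Measure Ω)
    (E : ℕ → ℕ → Set Ω) (G : ℕ → ENNReal) (hG : ∀ a b, μ (E a b) ≤ G (a + b))
    (hsum : ∑' s : ℕ, ((s : ENNReal) + 1) * G s ≠ ⊤) :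
    ∀ᵐ ω ∂μ, ∃ S : ℕ, ∀ a b : ℕ, S ≤ a + b → ω ∉ E a b := by
  rw [ae_iff]
  push_neg
  have hbad : ∀ S : ℕ, {ω | ∀ S : ℕ, ∃ a b, S ≤ a + b ∧ ω ∈ E a b} ⊆
      ⋃ p : {q : ℕ × ℕ // S ≤ q.1 + q.2}, E p.1.1 p.1.2 := by
    intro S ω hω
    obtain ⟨a, b, hab, hmem⟩ := hω S
    exact Set.mem_iUnion.2 ⟨⟨(a, b), hab⟩, hmem⟩
  have hle : ∀ S : ℕ, μ {ω | ∀ S : ℕ, ∃ a b, S ≤ a + b ∧ ω ∈ E a b} ≤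
      ∑' i : ℕ, (((i + S : ℕ) : ENNReal) + 1) * G (i + S) := by
    intro S
    calc μ _ ≤ μ (⋃ p : {q : ℕ × ℕ // S ≤ q.1 + q.2}, E p.1.1 p.1.2) := measure_mono (hbad S)
      _ ≤ ∑' p : {q : ℕ × ℕ // S ≤ q.1 + q.2}, μ (E p.1.1 p.1.2) := measure_iUnion_le _
      _ ≤ ∑' p : {q : ℕ × ℕ // S ≤ q.1 + q.2}, G (p.1.1 + p.1.2) := ENNReal.tsum_le_tsum
            (fun p => hG _ _)
      _ ≤ ∑' i : ℕ, ((i : ENNReal) + S + 1) * G (i + S) := aux_tsum_antidiag G S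
      _ = ∑' i : ℕ, (((i + S : ℕ) : ENNReal) + 1) * G (i + S) := by
          refine tsum_congr fun i => ?_; push_cast; ring_nf
  have htail : Tendsto (fun S : ℕ => ∑' i : ℕ, (((i + S : ℕ) : ENNReal) + 1) * G (i + S))
      atTop (nhds 0) :=
    ENNReal.tendsto_sum_nat_add (fun s => ((s : ENNReal) + 1) * G s) hsum
  have hzero : μ {ω | ∀ S : ℕ, ∃ a b, S ≤ a + b ∧ ω ∈ E a b} = 0 :=
    le_antisymm (ge_of_tendsto' htail (fun S => hle S)) (zero_le)
  convert hzero using 2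



set_option maxHeartbeats 1000000 in
set_option maxHeartbeats 1000000 in
private lemma aux_main {Ω : Type*} [MeasurableSpace Ω] (P : Measure Ω)
    [IsProbabilityMeasure P] (φ ψ ψinv q : ℝ → ℝ)
    (hψ_lub : ∀ x y : ℝ, x * y - φ y ≤ ψ x)
    (hq_mono : MonotoneOn q (Set.Ici 0)) (hq_nonneg : ∀ x, 0 ≤ x → 0 ≤ q x)
    (hψq : ∀ x, 0 ≤ x → ψ x = ∫ t in (0:ℝ)..x, q t)
    (hψinv : ∀ x, 0 ≤ x → 0 ≤ ψinv x ∧ ψ (ψinv x) = x)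
    (X : ℕ → ℕ → Ω → ℝ)
    (hindep : ProbabilityTheory.iIndepFun
      (fun p : ℕ × ℕ => X p.1 p.2) P)
    (κ r : ℝ → ℝ) (hκ_mono : StrictMonoOn κ (Set.Ioi 0))
    (hκ_deriv : ∀ x, 0 < x → HasDerivAt κ (r x) x) (hr_mono : MonotoneOn r (Set.Ioi 0))
    (C₀ : ℝ → ℝ) (hC₀ : ∀ x, 0 < x → C₀ x ≤ ψ x - κ x)
    (C : ℝ) (hC : 0 < C)
    (htail : ∀ k n : ℕ, 1 ≤ k → 1 ≤ n → ∀ x : ℝ, 0 < x →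
      P {ω | X k n ω < x} ≤ ENNReal.ofReal (Real.exp (-(C * Real.exp (-κ x)))))
    (A : ℝ) (hA : 0 < A) (ε₀ : ℝ) (hε₀ : 0 < ε₀)
    (hintb : ∀ ε : ℝ, 0 < ε → ε ≤ ε₀ →
      (∫⁻ y in Set.Ioi A, ENNReal.ofReal (ψ y * q y *
          Real.exp (ψ y - C / 2 * Real.exp (C₀ y + ε * r (y - ε)))) < ⊤)) :
    ∀ᵐ ω ∂P, ∀ ε : ℝ, 0 < ε → ∃ N : ℕ, ∀ m j : ℕ, 1 ≤ m → 1 ≤ j → N ≤ max m j →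
      ψinv (Real.log ((m * j : ℕ) : ℝ)) - runMax X m j ω < ε := by
  classical
  -- the monotone extension of q
  set q' : ℝ → ℝ := fun y => q (max y 0) with hq'def
  have hq'_eq : ∀ y : ℝ, 0 ≤ y → q' y = q y := fun y hy => by
    simp [hq'def, max_eq_left hy]
  have hq'_mono : Monotone q' := fun y z hyz => by
    exact hq_mono (le_max_right y 0) (le_max_right z 0) (max_le_max hyz le_rfl)
  have hq'_nonneg : ∀ y, 0 ≤ q' y := fun y => hq_nonneg _ (le_max_right y 0)
  have hq'_meas : Measurable q' := hq'_mono.measurable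
  have hq'_int : ∀ a b : ℝ, IntervalIntegrable q' volume a b := fun a b =>
    (hq'_mono.monotoneOn _).intervalIntegrable
  -- ψ facts
  have hψ_eq : ∀ x : ℝ, 0 ≤ x → ψ x = ∫ t in (0:ℝ)..x, q' t := by
    intro x hx
    rw [hψq x hx]
    refine intervalIntegral.integral_congr fun t ht => ?_
    rw [Set.uIcc_of_le hx] at ht
    exact (hq'_eq t ht.1).symm
  have hψ_sub : ∀ a b : ℝ, 0 ≤ a → a ≤ b → ψ b - ψ a = ∫ t in a..b, q' t := by
    intro a b ha hab
    rw [hψ_eq a ha, hψ_eq b (ha.trans hab)]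
    exact intervalIntegral.integral_interval_sub_left (hq'_int 0 b) (hq'_int 0 a)
  have hψ_mono : ∀ a b : ℝ, 0 ≤ a → a ≤ b → ψ a ≤ ψ b := by
    intro a b ha hab
    have h := hψ_sub a b ha hab
    have : (0:ℝ) ≤ ∫ t in a..b, q' t :=
      intervalIntegral.integral_nonneg hab fun u _ => hq'_nonneg u
    linarith
  have hψ_gap : ∀ a b : ℝ, 0 ≤ a → a ≤ b → (b - a) * q' a ≤ ψ b - ψ a := by
    intro a b ha hab
    rw [hψ_sub a b ha hab]
    calc (b - a) * q' a = ∫ _ in a..b, q' a := by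
          rw [intervalIntegral.integral_const, smul_eq_mul]
      _ ≤ ∫ t in a..b, q' t := by
          refine intervalIntegral.integral_mono_on hab (by simp) (hq'_int a b) ?_
          intro u hu
          exact hq'_mono (by exact hu.1)
  have hψinv_mono : ∀ x y : ℝ, 0 ≤ x → x ≤ y → ψinv x ≤ ψinv y := by
    intro x y hx hxy
    rcases eq_or_lt_of_le hxy with rfl | hlt
    · exact le_rfl
    by_contra hcon
    push_neg at hcon
    have := hψ_mono (ψinv y) (ψinv x) (hψinv y (hx.trans hxy)).1 hcon.le
    rw [(hψinv x hx).2, (hψinv y (hx.trans hxy)).2] at this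
    linarith
  -- q' is unbounded
  have hq_unbdd : ∀ M : ℝ, ∃ u₀ : ℝ, 0 ≤ u₀ ∧ ∀ u, u₀ ≤ u → M ≤ q' u := by
    intro M
    by_cases hex : ∃ u : ℝ, 0 ≤ u ∧ M ≤ q' u
    · obtain ⟨u, hu, hMu⟩ := hex
      exact ⟨u, hu, fun z hz => hMu.trans (hq'_mono hz)⟩
    · exfalso
      push_neg at hex
      set x : ℝ := |φ (M + 1)| + 1 with hx
      have hx0 : 0 < x := by positivity
      have h1 : ψ x ≤ M * x := by
        rw [hψ_eq x hx0.le]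
        calc (∫ t in (0:ℝ)..x, q' t) ≤ ∫ _ in (0:ℝ)..x, M := by
              refine intervalIntegral.integral_mono_on hx0.le (hq'_int 0 x) (by simp) ?_
              intro u hu
              exact (hex u hu.1).le
          _ = M * x := by rw [intervalIntegral.integral_const, smul_eq_mul]; ring
      have h2 : x * (M + 1) - φ (M + 1) ≤ ψ x := hψ_lub x (M + 1)
      have h3 : M * x + 1 ≤ x * (M + 1) - φ (M + 1) := by
        have : φ (M+1) ≤ |φ (M+1)| := le_abs_self _
        nlinarith
      linarith
  -- runMax helpers
  have hSfin : ∀ (m j : ℕ) (ω : Ω),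
      {y | ∃ k n, 1 ≤ k ∧ k ≤ m ∧ 1 ≤ n ∧ n ≤ j ∧ y = X k n ω}.Finite := by
    intro m j ω
    have hsub : {y | ∃ k n, 1 ≤ k ∧ k ≤ m ∧ 1 ≤ n ∧ n ≤ j ∧ y = X k n ω} ⊆
        (fun p : ℕ × ℕ => X p.1 p.2 ω) '' (Set.Icc 1 m ×ˢ Set.Icc 1 j) := by
      rintro y ⟨k, n, h1, h2, h3, h4, rfl⟩
      exact ⟨(k, n), ⟨⟨h1, h2⟩, ⟨h3, h4⟩⟩, rfl⟩
    exact (((Set.finite_Icc 1 m).prod (Set.finite_Icc 1 j)).image _).subset hsub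
  have hmem_le : ∀ (m j : ℕ) (ω : Ω) (k n : ℕ), 1 ≤ k → k ≤ m → 1 ≤ n → n ≤ j →
      X k n ω ≤ runMax X m j ω := fun m j ω k n h1 h2 h3 h4 =>
    le_csSup (hSfin m j ω).bddAbove ⟨k, n, h1, h2, h3, h4, rfl⟩
  have hrm_mono : ∀ (m j m' j' : ℕ) (ω : Ω), 1 ≤ m' → 1 ≤ j' → m' ≤ m → j' ≤ j →
      runMax X m' j' ω ≤ runMax X m j ω := by
    intro m j m' j' ω h1 h2 h3 h4
    refine csSup_le_csSup (hSfin m j ω).bddAbove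
      ⟨X 1 1 ω, 1, 1, le_rfl, h1, le_rfl, h2, rfl⟩ ?_
    rintro y ⟨k, n, hk1, hk2, hn1, hn2, rfl⟩
    exact ⟨k, n, hk1, hk2.trans h3, hn1, hn2.trans h4, rfl⟩
  -- reduce to a single ε
  have key : ∀ ε : ℝ, 0 < ε → ∀ᵐ ω ∂P, ∃ N : ℕ, ∀ m j : ℕ, 1 ≤ m → 1 ≤ j →
      N ≤ max m j → ψinv (Real.log ((m * j : ℕ) : ℝ)) - runMax X m j ω < ε := by
    intro ε hε
    set ε' : ℝ := min (ε/2) ε₀ with hε'def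
    have hε'_pos : 0 < ε' := lt_min (by linarith) hε₀
    have hε'_le : ε' ≤ ε₀ := min_le_right _ _
    have hε'_half : ε' ≤ ε/2 := min_le_left _ _
    have hb := hintb ε' hε'_pos hε'_le
    have hlog2 : 0 < Real.log 2 := Real.log_pos (by norm_num)
    set v : ℕ → ℝ := fun s => ψinv ((s:ℝ) * Real.log 2) with hvdef
    have hv_nonneg : ∀ s : ℕ, 0 ≤ v s := fun s => (hψinv _ (by positivity)).1
    have hψv : ∀ s : ℕ, ψ (v s) = (s:ℝ) * Real.log 2 := fun s => (hψinv _ (by positivity)).2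
    have hv_mono : ∀ s t : ℕ, s ≤ t → v s ≤ v t := by
      intro s t hst
      refine hψinv_mono _ _ (by positivity) ?_
      have : (s:ℝ) ≤ t := Nat.cast_le.2 hst
      nlinarith
    have hv_lt : ∀ s t : ℕ, s < t → v s < v t := by
      intro s t hst
      rcases lt_or_ge (v s) (v t) with h | h
      · exact h
      exfalso
      have h1 := hψ_mono (v t) (v s) (hv_nonneg t) h
      rw [hψv s, hψv t] at h1
      have : (s:ℝ) < t := Nat.cast_lt.2 hst
      nlinarith
    have hv_unbdd : ∀ T : ℝ, ∃ s₀ : ℕ, ∀ s : ℕ, s₀ ≤ s → T < v s := by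
      intro T
      obtain ⟨n, hn⟩ := exists_nat_gt (ψ (max T 0) / Real.log 2)
      refine ⟨n, fun s hs => ?_⟩
      have hns : (n:ℝ) ≤ s := Nat.cast_le.2 hs
      by_contra hcon
      push_neg at hcon
      have h1 : ψ (v s) ≤ ψ (max T 0) := by
        refine hψ_mono _ _ (hv_nonneg s) (hcon.trans (le_max_left _ _))
      rw [hψv s] at h1
      rw [div_lt_iff₀ hlog2] at hn
      nlinarith
    -- MVT for κ
    have hMVT : ∀ y : ℝ, ε' < y → ε' * r (y - ε') ≤ κ y - κ (y - ε') := by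
      intro y hy
      have hab : y - ε' < y := by linarith
      have hpos : 0 < y - ε' := by linarith
      have hcont : ContinuousOn κ (Set.Icc (y - ε') y) := by
        intro x hx
        exact ((hκ_deriv x (hpos.trans_le hx.1)).continuousAt).continuousWithinAt
      have hder : ∀ x ∈ Set.Ioo (y - ε') y, HasDerivAt κ (r x) x := fun x hx =>
        hκ_deriv x (hpos.trans hx.1)
      obtain ⟨c, hc, hceq⟩ := exists_hasDerivAt_eq_slope κ r hab hcont hder
      have hgap : y - (y - ε') = ε' := by ring
      rw [hgap] at hceq
      have hrc : r (y - ε') ≤ r c := hr_mono hpos (hpos.trans hc.1) hc.1.le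
      have : κ y - κ (y - ε') = ε' * r c := by
        field_simp at hceq
        linarith [hceq]
      rw [this]
      exact mul_le_mul_of_nonneg_left hrc hε'_pos.le
    -- choice of s₁
    obtain ⟨s₁', hs₁'⟩ := hv_unbdd (max A ε')
    set s₁ : ℕ := max s₁' 1 with hs₁def
    have hs₁_one : 1 ≤ s₁ := le_max_right _ _
    have hv_gt : ∀ s : ℕ, s₁ ≤ s → max A ε' < v s := fun s hs =>
      hs₁' s ((le_max_left _ _).trans hs)
    have hvA : ∀ s : ℕ, s₁ ≤ s → A < v s := fun s hs =>
      (le_max_left A ε').trans_lt (hv_gt s hs)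
    have hvε' : ∀ s : ℕ, s₁ ≤ s → ε' < v s := fun s hs =>
      (le_max_right A ε').trans_lt (hv_gt s hs)
    set G : ℕ → ENNReal := fun s => if s < s₁ then 1
      else ENNReal.ofReal (Real.exp (-(C * 2^s * Real.exp (-κ (v s - ε'))))) with hGdef
    set E : ℕ → ℕ → Set Ω := fun a b =>
      {ω | runMax X (2^a) (2^b) ω < v (a+b) - ε'} with hEdef
    have hG : ∀ a b : ℕ, P (E a b) ≤ G (a+b) := by
      intro a b
      by_cases hcase : a + b < s₁
      · rw [hGdef]
        simp only [hcase, if_true]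
        exact prob_le_one
      · push_neg at hcase
        rw [hGdef]
        simp only [not_lt.2 hcase, if_neg (not_lt.2 hcase)]
        set w : ℝ := v (a+b) - ε' with hwdef
        have hw_pos : 0 < w := by
          have := hvε' (a+b) hcase
          rw [hwdef]; linarith
        set Fs : Finset (ℕ × ℕ) := Finset.Icc 1 (2^a) ×ˢ Finset.Icc 1 (2^b) with hFsdef
        have hsubset : E a b ⊆
            ⋂ p ∈ Fs, (fun p : ℕ × ℕ => X p.1 p.2) p ⁻¹' (Set.Iio w) := by
          intro ω hω
          rw [hEdef] at hω
          simp only [Set.mem_setOf_eq] at hω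
          simp only [Set.mem_iInter, Set.mem_preimage, Set.mem_Iio]
          intro p hp
          rw [hFsdef, Finset.mem_product, Finset.mem_Icc, Finset.mem_Icc] at hp
          exact lt_of_le_of_lt
            (hmem_le (2^a) (2^b) ω p.1 p.2 hp.1.1 hp.1.2 hp.2.1 hp.2.2) hω
        have hprod := hindep.measure_inter_preimage_eq_mul (S := Fs)
          (sets := fun _ => Set.Iio w) (fun i _ => measurableSet_Iio)
        have hcard : Fs.card = 2^(a+b) := by
          rw [hFsdef, Finset.card_product, Nat.card_Icc, Nat.card_Icc, pow_add]
          simp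
        calc P (E a b) ≤ P (⋂ p ∈ Fs, (fun p : ℕ × ℕ => X p.1 p.2) p ⁻¹' (Set.Iio w)) :=
              measure_mono hsubset
          _ = ∏ p ∈ Fs, P ((fun p : ℕ × ℕ => X p.1 p.2) p ⁻¹' (Set.Iio w)) := hprod
          _ ≤ ∏ _p ∈ Fs, ENNReal.ofReal (Real.exp (-(C * Real.exp (-κ w)))) := by
              refine Finset.prod_le_prod' fun p hp => ?_
              rw [hFsdef, Finset.mem_product, Finset.mem_Icc, Finset.mem_Icc] at hp
              have htl := htail p.1 p.2 hp.1.1 hp.2.1 w hw_pos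
              exact htl
          _ = ENNReal.ofReal (Real.exp (-(C * Real.exp (-κ w)))) ^ Fs.card :=
              Finset.prod_const _
          _ = ENNReal.ofReal (Real.exp (-(C * 2^(a+b) * Real.exp (-κ w)))) := by
              rw [hcard, ← ENNReal.ofReal_pow (Real.exp_nonneg _), ← Real.exp_nat_mul]
              congr 2
              push_cast
              ring
    have h2t : ∀ n : ℕ, Real.exp ((n:ℝ) * Real.log 2) = 2^n := fun n => by
      rw [Real.exp_nat_mul, Real.exp_log two_pos]
    have hsum : ∑' s : ℕ, ((s : ENNReal) + 1) * G s ≠ ⊤ := by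
      set cR : ℕ → ℝ := fun t => ((t:ℝ) * Real.log 2) * 2^t *
          Real.exp (-(C * 2^t * Real.exp (-κ (v t - ε')))) with hcRdef
      have hcR_nonneg : ∀ t, 0 ≤ cR t := fun t => by positivity
      set F : ℝ → ENNReal := fun y => ENNReal.ofReal (ψ y * q y *
          Real.exp (ψ y - C / 2 * Real.exp (C₀ y + ε' * r (y - ε')))) with hFdef
      set f : ℕ → ℝ → ENNReal := fun t => (Set.Ioc (v t) (v (t+1))).indicator
          (fun y => ENNReal.ofReal (cR t * q' y)) with hfdef
      have hf_meas : ∀ t, Measurable (f t) := fun t =>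
        (ENNReal.measurable_ofReal.comp (measurable_const.mul hq'_meas)).indicator
          measurableSet_Ioc
      -- pointwise bound on the block
      have hpoint : ∀ t : ℕ, s₁ ≤ t → ∀ y ∈ Set.Ioc (v t) (v (t+1)),
          cR t * q' y ≤ ψ y * q y *
            Real.exp (ψ y - C / 2 * Real.exp (C₀ y + ε' * r (y - ε'))) := by
        intro t ht y hy
        have hvtA : A < v t := hvA t ht
        have hvtε' : ε' < v t := hvε' t ht
        have hy_pos : 0 < y := lt_trans (lt_of_lt_of_le hA hvtA.le) hy.1
        have hyε' : ε' < y := hvtε'.trans hy.1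
        have e1 : (t:ℝ) * Real.log 2 ≤ ψ y := by
          have := hψ_mono (v t) y (hv_nonneg t) hy.1.le
          rw [hψv t] at this; linarith
        have e2 : ψ y ≤ ((t:ℝ) + 1) * Real.log 2 := by
          have := hψ_mono y (v (t+1)) hy_pos.le hy.2
          rw [hψv (t+1)] at this; push_cast at this; linarith
        have e3 : C₀ y + ε' * r (y - ε') ≤ ψ y - κ (y - ε') := by
          have h1 := hC₀ y hy_pos
          have h2 := hMVT y hyε'
          linarith
        have e4 : κ (v t - ε') ≤ κ (y - ε') := by
          rcases eq_or_lt_of_le (sub_le_sub_right hy.1.le ε') with heq | hlt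
          · rw [heq]
          · exact (hκ_mono (by simp [Set.mem_Ioi]; linarith)
              (by simp [Set.mem_Ioi]; linarith) hlt).le
        have hE : Real.exp (C₀ y + ε' * r (y - ε')) ≤
            2 * 2^t * Real.exp (-κ (v t - ε')) := by
          have hle : C₀ y + ε' * r (y - ε') ≤ ((t:ℝ)+1) * Real.log 2 + (-κ (v t - ε')) := by
            linarith
          calc Real.exp (C₀ y + ε' * r (y - ε'))
              ≤ Real.exp (((t:ℝ)+1) * Real.log 2 + (-κ (v t - ε'))) := Real.exp_le_exp.2 hle
            _ = 2 * 2^t * Real.exp (-κ (v t - ε')) := by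
                rw [Real.exp_add]
                have : ((t:ℝ)+1) * Real.log 2 = (((t+1:ℕ)):ℝ) * Real.log 2 := by push_cast; ring
                rw [this, h2t (t+1)]
                ring
        have e5 : (2:ℝ)^t * Real.exp (-(C * 2^t * Real.exp (-κ (v t - ε')))) ≤
            Real.exp (ψ y - C / 2 * Real.exp (C₀ y + ε' * r (y - ε'))) := by
          have hcomb : (2:ℝ)^t * Real.exp (-(C * 2^t * Real.exp (-κ (v t - ε')))) =
              Real.exp ((t:ℝ) * Real.log 2 + -(C * 2^t * Real.exp (-κ (v t - ε')))) := by
            rw [Real.exp_add, h2t t]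
          rw [hcomb]
          apply Real.exp_le_exp.2
          have hmul := mul_le_mul_of_nonneg_left hE (by linarith : (0:ℝ) ≤ C/2)
          have hhalf : C/2 * (2 * 2^t * Real.exp (-κ (v t - ε'))) =
              C * 2^t * Real.exp (-κ (v t - ε')) := by ring
          rw [hhalf] at hmul
          linarith
        have hq'y : q' y = q y := hq'_eq y hy_pos.le
        have hψy_nonneg : (0:ℝ) ≤ ψ y := le_trans (by positivity) e1
        calc cR t * q' y
            = (((t:ℝ) * Real.log 2) *
                (2^t * Real.exp (-(C * 2^t * Real.exp (-κ (v t - ε')))))) * q y := by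
              rw [hq'y, hcRdef]; ring
          _ ≤ (ψ y * Real.exp (ψ y - C / 2 * Real.exp (C₀ y + ε' * r (y - ε')))) * q y := by
              refine mul_le_mul_of_nonneg_right ?_ (hq_nonneg y hy_pos.le)
              exact mul_le_mul e1 e5 (by positivity) hψy_nonneg
          _ = ψ y * q y * Real.exp (ψ y - C / 2 * Real.exp (C₀ y + ε' * r (y - ε'))) := by
              ring
      have hfF : ∀ t : ℕ, s₁ ≤ t → ∀ y : ℝ, f t y ≤ F y := by
        intro t ht y
        simp only [hfdef]
        by_cases hy : y ∈ Set.Ioc (v t) (v (t+1))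
        · rw [Set.indicator_of_mem hy, hFdef]
          exact ENNReal.ofReal_le_ofReal (hpoint t ht y hy)
        · rw [Set.indicator_of_notMem hy]
          exact zero_le
      -- the blocks are pairwise disjoint; sum of f's is below F
      have hHF : ∀ y : ℝ, (∑' i : ℕ, f (i + s₁) y) ≤ F y := by
        intro y
        by_cases hy : ∃ i : ℕ, y ∈ Set.Ioc (v (i + s₁)) (v (i + s₁ + 1))
        · obtain ⟨i, hi⟩ := hy
          have huniq : ∀ i' : ℕ, i' ≠ i → f (i' + s₁) y = 0 := by
            intro i' hne
            simp only [hfdef]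
            apply Set.indicator_of_notMem
            intro hy'
            rcases lt_or_gt_of_ne hne with h | h
            · have hmono := hv_mono (i' + s₁ + 1) (i + s₁) (by omega)
              have h1 := hy'.2
              have h2 := hi.1
              linarith
            · have hmono := hv_mono (i + s₁ + 1) (i' + s₁) (by omega)
              have h1 := hi.2
              have h2 := hy'.1
              linarith
          rw [tsum_eq_single i fun i' hne => huniq i' hne]
          exact hfF (i + s₁) (by omega) y
        · push_neg at hy
          have hzero : ∀ i : ℕ, f (i + s₁) y = 0 := fun i => by
            simp only [hfdef]; exact Set.indicator_of_notMem (hy i) _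
          rw [tsum_congr hzero, tsum_zero]
          exact zero_le
      -- each block integral
      have hblock : ∀ t : ℕ, s₁ ≤ t → ∫⁻ y in Set.Ioi A, f t y =
          ENNReal.ofReal (cR t) * ENNReal.ofReal (Real.log 2) := by
        intro t ht
        have hvt1 : v t ≤ v (t+1) := hv_mono t (t+1) (by omega)
        have hsubA : Set.Ioc (v t) (v (t+1)) ⊆ Set.Ioi A := fun y hy =>
          Set.mem_Ioi.2 ((hvA t ht).trans hy.1)
        simp only [hfdef]
        rw [lintegral_indicator measurableSet_Ioc]
        rw [Measure.restrict_restrict measurableSet_Ioc,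
          Set.inter_eq_self_of_subset_left hsubA]
        have hofmul : ∀ y : ℝ, ENNReal.ofReal (cR t * q' y) =
            ENNReal.ofReal (cR t) * ENNReal.ofReal (q' y) := fun y =>
          ENNReal.ofReal_mul (hcR_nonneg t)
        simp_rw [hofmul]
        rw [lintegral_const_mul _ hq'_meas.ennreal_ofReal]
        congr 1
        have hInt : IntegrableOn q' (Set.Ioc (v t) (v (t+1))) volume := by
          have h := hq'_int (v t) (v (t+1))
          rwa [intervalIntegrable_iff_integrableOn_Ioc_of_le hvt1] at h
        rw [← MeasureTheory.ofReal_integral_eq_lintegral_ofReal hInt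
          (Filter.Eventually.of_forall fun y => hq'_nonneg y)]
        congr 1
        rw [← intervalIntegral.integral_of_le hvt1]
        have hsub := hψ_sub (v t) (v (t+1)) (hv_nonneg t) hvt1
        rw [hψv, hψv] at hsub
        push_cast at hsub
        linarith
      -- sum of block integrals is bounded by the hypothesis integral
      have hseries : ∑' i : ℕ, ENNReal.ofReal (cR (i + s₁)) * ENNReal.ofReal (Real.log 2) ≤
          ∫⁻ y in Set.Ioi A, F y := by
        calc ∑' i : ℕ, ENNReal.ofReal (cR (i + s₁)) * ENNReal.ofReal (Real.log 2)
            = ∑' i : ℕ, ∫⁻ y in Set.Ioi A, f (i + s₁) y :=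
              tsum_congr fun i => (hblock (i + s₁) (by omega)).symm
          _ = ∫⁻ y in Set.Ioi A, ∑' i : ℕ, f (i + s₁) y :=
              (lintegral_tsum fun i => (hf_meas _).aemeasurable).symm
          _ ≤ ∫⁻ y in Set.Ioi A, F y := lintegral_mono hHF
      have hFfin : ∫⁻ y in Set.Ioi A, F y < ⊤ := by rw [hFdef]; exact hb
      -- the per-term comparison for large s
      set K : ENNReal := ENNReal.ofReal (2 / (Real.log 2 * Real.log 2)) with hKdef
      have hterm : ∀ t : ℕ, s₁ ≤ t → ((t : ENNReal) + 1) * G t ≤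
          K * (ENNReal.ofReal (cR t) * ENNReal.ofReal (Real.log 2)) := by
        intro t ht
        rw [hGdef]
        simp only [if_neg (not_lt.2 ht)]
        have hcast : ((t : ENNReal) + 1) = ENNReal.ofReal ((t:ℝ) + 1) := by
          rw [ENNReal.ofReal_add (by positivity) zero_le_one, ENNReal.ofReal_natCast,
            ENNReal.ofReal_one]
        rw [hcast, ← ENNReal.ofReal_mul (by positivity), hKdef,
          ← ENNReal.ofReal_mul (hcR_nonneg t), ← ENNReal.ofReal_mul (by positivity)]
        apply ENNReal.ofReal_le_ofReal
        have ht1 : (1:ℝ) ≤ (t:ℝ) := by exact_mod_cast le_trans hs₁_one ht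
        have h2t1 : (1:ℝ) ≤ 2^t := one_le_pow₀ (by norm_num : (1:ℝ) ≤ 2)
        have hepos : (0:ℝ) < Real.exp (-(C * 2^t * Real.exp (-κ (v t - ε')))) :=
          Real.exp_pos _
        rw [hcRdef]
        have heq : 2 / (Real.log 2 * Real.log 2) *
            ((((t:ℝ) * Real.log 2) * 2^t *
              Real.exp (-(C * 2^t * Real.exp (-κ (v t - ε'))))) * Real.log 2) =
            2 * (t:ℝ) * 2^t * Real.exp (-(C * 2^t * Real.exp (-κ (v t - ε')))) := by
          field_simp
        rw [heq]
        nlinarith [hepos, ht1, h2t1,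
          mul_le_mul_of_nonneg_left h2t1 (by linarith : (0:ℝ) ≤ (t:ℝ))]
      -- finish by splitting the series
      set B1 : ℕ → ENNReal := fun s => if s < s₁ then ((s : ENNReal) + 1) else 0 with hB1def
      set B2 : ℕ → ENNReal := fun s => if s < s₁ then 0 else
        K * (ENNReal.ofReal (cR s) * ENNReal.ofReal (Real.log 2)) with hB2def
      have hpt : ∀ s : ℕ, ((s : ENNReal) + 1) * G s ≤ B1 s + B2 s := by
        intro s
        by_cases hcs : s < s₁
        · simp only [hB1def, hB2def, if_pos hcs]
          rw [hGdef]
          simp only [if_pos hcs, mul_one, add_zero, le_refl]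
        · simp only [hB1def, hB2def, if_neg hcs]
          rw [zero_add]
          exact hterm s (not_lt.1 hcs)
      have hB1fin : ∑' s : ℕ, B1 s ≠ ⊤ := by
        rw [tsum_eq_sum (s := Finset.range s₁)
          (fun s hs => by
            simp only [hB1def]
            rw [if_neg (fun h => hs (Finset.mem_range.2 h))])]
        refine (ENNReal.sum_lt_top.2 fun s _ => ?_).ne
        simp only [hB1def]
        split
        · exact ENNReal.add_lt_top.2 ⟨ENNReal.natCast_lt_top s, ENNReal.one_lt_top⟩
        · exact ENNReal.zero_lt_top
      have hB2fin : ∑' s : ℕ, B2 s ≠ ⊤ := by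
        have hinj : Function.Injective (fun i : ℕ => i + s₁) := add_left_injective s₁
        have hsupp : Function.support B2 ⊆ Set.range (fun i : ℕ => i + s₁) := by
          intro s hs
          rcases lt_or_ge s s₁ with h | h
          · exfalso; apply hs; simp only [hB2def]; rw [if_pos h]
          · refine ⟨s - s₁, ?_⟩
            show s - s₁ + s₁ = s
            omega
        rw [← Function.Injective.tsum_eq hinj hsupp]
        have hcongr : ∀ i : ℕ, B2 (i + s₁) =
            K * (ENNReal.ofReal (cR (i + s₁)) * ENNReal.ofReal (Real.log 2)) := fun i => by
          simp only [hB2def]; rw [if_neg (by omega)]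
        rw [tsum_congr hcongr, ENNReal.tsum_mul_left]
        exact (ENNReal.mul_lt_top ENNReal.ofReal_lt_top (lt_of_le_of_lt hseries hFfin)).ne
      refine ne_top_of_le_ne_top (ENNReal.add_ne_top.2 ⟨hB1fin, hB2fin⟩) ?_
      calc ∑' s : ℕ, ((s : ENNReal) + 1) * G s ≤ ∑' s : ℕ, (B1 s + B2 s) :=
            ENNReal.tsum_le_tsum hpt
        _ = ∑' s : ℕ, B1 s + ∑' s : ℕ, B2 s := ENNReal.tsum_add
    have hae := aux_borel_cantelli P E G hG hsum
    -- deterministic conclusion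
    obtain ⟨u₀, hu₀, hu₀q⟩ := hq_unbdd (8 * Real.log 2 / ε)
    obtain ⟨s₃, hs₃⟩ := hv_unbdd u₀
    filter_upwards [hae] with ω hω
    obtain ⟨S, hS⟩ := hω
    set s₂ : ℕ := max (max S s₃) 1 with hs₂def
    refine ⟨2^(s₂+1), fun m j hm hj hN => ?_⟩
    set a : ℕ := Nat.log 2 m with hadef
    set b : ℕ := Nat.log 2 j with hbdef
    have h2am : 2^a ≤ m := Nat.pow_log_le_self 2 (by omega)
    have hm2a : m < 2^(a+1) := Nat.lt_pow_succ_log_self (by norm_num) m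
    have h2bj : 2^b ≤ j := Nat.pow_log_le_self 2 (by omega)
    have hj2b : j < 2^(b+1) := Nat.lt_pow_succ_log_self (by norm_num) j
    have hs_ge : s₂ ≤ a + b := by
      have h1 : max m j < 2^(a + b + 1) := by
        have ha1 : (2:ℕ)^(a+1) ≤ 2^(a+b+1) := Nat.pow_le_pow_right (by norm_num) (by omega)
        have hb1 : (2:ℕ)^(b+1) ≤ 2^(a+b+1) := Nat.pow_le_pow_right (by norm_num) (by omega)
        exact max_lt (hm2a.trans_le ha1) (hj2b.trans_le hb1)
      have h2 : (2:ℕ)^(s₂+1) < 2^(a+b+1) := lt_of_le_of_lt hN h1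
      have := (Nat.pow_lt_pow_iff_right (by norm_num : 1 < 2)).1 h2
      omega
    have hS_ab : S ≤ a + b := le_trans (le_trans (le_max_left S s₃) (le_max_left _ 1)) hs_ge
    have hrm : v (a+b) - ε' ≤ runMax X m j ω := by
      have h1 : ω ∉ E a b := hS a b hS_ab
      rw [hEdef] at h1
      simp only [Set.mem_setOf_eq, not_lt] at h1
      exact h1.trans (hrm_mono m j (2^a) (2^b) ω (Nat.one_le_two_pow) (Nat.one_le_two_pow)
        h2am h2bj)
    have hmj1 : (1:ℝ) ≤ ((m * j : ℕ) : ℝ) := by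
      have : 1 ≤ m * j := Nat.one_le_iff_ne_zero.2 (by positivity)
      exact_mod_cast this
    have hup : ψinv (Real.log ((m * j : ℕ) : ℝ)) ≤ v (a + b + 2) := by
      have hlog_nonneg : 0 ≤ Real.log ((m * j : ℕ) : ℝ) := Real.log_nonneg hmj1
      have hmjle : ((m * j : ℕ) : ℝ) ≤ 2 ^ (a + b + 2) := by
        have h2 : m * j ≤ 2^(a + b + 2) := by
          calc m * j ≤ 2^(a+1) * 2^(b+1) := Nat.mul_le_mul hm2a.le hj2b.le
            _ = 2^(a+b+2) := by rw [← pow_add]; congr 1; omega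
        calc ((m * j : ℕ) : ℝ) ≤ ((2^(a+b+2) : ℕ) : ℝ) := by exact_mod_cast h2
          _ = 2 ^ (a+b+2) := by push_cast; ring
      have hlogle : Real.log ((m * j : ℕ) : ℝ) ≤ ((a + b + 2 : ℕ) : ℝ) * Real.log 2 := by
        calc Real.log ((m * j : ℕ) : ℝ) ≤ Real.log (2 ^ (a+b+2)) :=
              Real.log_le_log (by linarith) hmjle
          _ = ((a + b + 2 : ℕ) : ℝ) * Real.log 2 := by
              rw [Real.log_pow]
      exact hψinv_mono _ _ hlog_nonneg hlogle
    have hgap : v (a + b + 2) - v (a + b) ≤ ε / 4 := by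
      have hs₃ab : u₀ < v (a + b) := hs₃ (a+b)
        (le_trans (le_trans (le_max_right S s₃) (le_max_left _ 1)) hs_ge)
      have hq_vs : 8 * Real.log 2 / ε ≤ q' (v (a+b)) := hu₀q _ hs₃ab.le
      have h1 : (v (a+b+2) - v (a+b)) * q' (v (a+b)) ≤ ψ (v (a+b+2)) - ψ (v (a+b)) :=
        hψ_gap _ _ (hv_nonneg _) (hv_mono (a+b) (a+b+2) (by omega))
      rw [hψv, hψv] at h1
      have h2 : ((a+b+2:ℕ):ℝ) * Real.log 2 - ((a+b:ℕ):ℝ) * Real.log 2 = 2 * Real.log 2 := by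
        push_cast; ring
      rw [h2] at h1
      have hq_pos : (0:ℝ) < q' (v (a+b)) := lt_of_lt_of_le (by positivity) hq_vs
      have hΔ : 0 ≤ v (a+b+2) - v (a+b) := by
        have := hv_mono (a+b) (a+b+2) (by omega); linarith
      rw [div_le_iff₀ hε] at hq_vs
      nlinarith [mul_le_mul_of_nonneg_left hq_vs hΔ]
    calc ψinv (Real.log ((m * j : ℕ) : ℝ)) - runMax X m j ω
        ≤ v (a+b+2) - (v (a+b) - ε') := by linarith
      _ = (v (a+b+2) - v (a+b)) + ε' := by ring
      _ ≤ ε/4 + ε/2 := by linarith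
      _ < ε := by linarith

  have := MeasureTheory.ae_all_iff.2 fun i : ℕ => key (1/(i+1)) (by positivity)
  filter_upwards [this] with ω hω ε hε
  obtain ⟨i, hi⟩ := exists_nat_one_div_lt hε
  obtain ⟨N, hN⟩ := hω i
  refine ⟨N, fun m j h1 h2 h3 => ?_⟩
  have := hN m j h1 h2 h3
  have hcast : ((i:ℝ) + 1) = ((i:ℕ) + 1 : ℕ) := by push_cast; ring
  calc ψinv (Real.log ((m * j : ℕ) : ℝ)) - runMax X m j ω < 1/(i+1) := this
    _ < ε := by exact_mod_cast hi


/-- Corollary 2: for an independent double array of `φ`-subgaussian random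
variables with `sup_{k,n} τ_φ(X_{k,n}) ≤ 1`, under the left-tail bound
`P(X_{k,n} < x) ≤ exp(-C exp(-κ(x)))` and two integral conditions,
`(max_{1≤k≤m,1≤n≤j} X_{k,n} - ψ⁻¹(ln(mj)))⁻ → 0` a.s. as `m ∨ j → ∞`. -/
theorem runMax_neg_part_tendsto_zero_of_tau_le_one
    {Ω : Type*} [MeasurableSpace Ω] (P : Measure Ω) [IsProbabilityMeasure P]
    (φ ψ ψinv q : ℝ → ℝ) (hφ : IsOrliczN φ) (hψ : IsYoungFenchel φ ψ)
    (hq_mono : MonotoneOn q (Set.Ici 0)) (hq_nonneg : ∀ x, 0 ≤ x → 0 ≤ q x)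
    (hψq : ∀ x, 0 ≤ x → ψ x = ∫ t in (0:ℝ)..x, q t)
    (hψinv : ∀ x, 0 ≤ x → 0 ≤ ψinv x ∧ ψ (ψinv x) = x)
    (X : ℕ → ℕ → Ω → ℝ)
    (hsub : ∀ k n : ℕ, 1 ≤ k → 1 ≤ n → IsPhiSubGaussian φ P (X k n))
    (hτ : ∀ k n : ℕ, 1 ≤ k → 1 ≤ n → tauPhi φ P (X k n) ≤ 1)
    (hindep : ProbabilityTheory.iIndepFun
      (fun p : ℕ × ℕ => X p.1 p.2) P)
    (κ r : ℝ → ℝ) (hκ_pos : ∀ x, 0 < x → 0 < κ x) (hκ_mono : StrictMonoOn κ (Set.Ioi 0))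
    (hκ_deriv : ∀ x, 0 < x → HasDerivAt κ (r x) x) (hr_mono : MonotoneOn r (Set.Ioi 0))
    (C₀ : ℝ → ℝ) (hC₀ : ∀ x, 0 < x → C₀ x ≤ ψ x - κ x)
    (C : ℝ) (hC : 0 < C)
    (htail : ∀ k n : ℕ, 1 ≤ k → 1 ≤ n → ∀ x : ℝ, 0 < x →
      P {ω | X k n ω < x} ≤ ENNReal.ofReal (Real.exp (-(C * Real.exp (-κ x)))))
    (hint : ∃ A > (0:ℝ), ∃ ε₀ > (0:ℝ), ∀ ε : ℝ, 0 < ε → ε ≤ ε₀ →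
      (∫⁻ y in Set.Ioi A, ENNReal.ofReal (Real.exp (-(C * y / 2) *
        Real.exp (-κ (ψinv (Real.log y) - ε)))) < ⊤)
      ∧ (∫⁻ y in Set.Ioi A, ENNReal.ofReal (ψ y * q y *
          Real.exp (ψ y - C / 2 * Real.exp (C₀ y + ε * r (y - ε)))) < ⊤)) :
    ∀ᵐ ω ∂P, TendstoMaxIdx
      (fun m j => max (-(runMax X m j ω - ψinv (Real.log ((m * j : ℕ) : ℝ)))) 0) 0 := by
  obtain ⟨A, hA, ε₀, hε₀, hintc⟩ := hint
  have hψ_lub : ∀ x y : ℝ, x * y - φ y ≤ ψ x := fun x y => (hψ x).1 ⟨y, rfl⟩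
  have hintb : ∀ ε : ℝ, 0 < ε → ε ≤ ε₀ →
      (∫⁻ y in Set.Ioi A, ENNReal.ofReal (ψ y * q y *
        Real.exp (ψ y - C / 2 * Real.exp (C₀ y + ε * r (y - ε)))) < ⊤) :=
    fun ε h1 h2 => (hintc ε h1 h2).2
  have hmain := aux_main P φ ψ ψinv q hψ_lub hq_mono hq_nonneg hψq hψinv X hindep κ r
    hκ_mono hκ_deriv hr_mono C₀ hC₀ C hC htail A hA ε₀ hε₀ hintb
  filter_upwards [hmain] with ω hω
  intro ε hε
  obtain ⟨N, hN⟩ := hω ε hε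
  refine ⟨N, fun m j h1 h2 h3 => ?_⟩
  have h := hN m j h1 h2 h3
  rw [sub_zero, abs_of_nonneg (le_max_right _ _)]
  exact max_lt (by linarith) hε
end

section
/- Let {X_{k,n} : k,n ≥ 1} be a double array of independent φ-subgaussian random variables with τ_φ(X_{k,n}) = 1 for all k,n, and let a_{m,j} = ψ^{−1}(ln(mj)). Assume: (i) there exists a strictly increasing function κ : (0,∞) → (0,∞) and a constant C > 0 such that P(X_{k,n} > x) ≥ C exp(−κ(x)) for all k,n ≥ 1 and x > 0; (ii) there exist x₀ > 0 and constants B, C₁ > 0 such that exp(−κ(x)) ≥ C₁ exp(−B ψ(x)) for all x ≥ x₀; (iii) for some ε > 0 there is C₂ < +∞ with sup_{x > x₀} q_φ(x + ε)/ψ(x) ≤ C₂. Then for every α < 2 − B(1 + C₂ ε) it holds that Σ_{m=1}^∞ Σ_{j=1}^∞ (mj)^{−α} P(Y⁺_{m,j} > ε) = +∞. -/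
open MeasureTheory Real Filter Set

section Helpers

lemma auxA {t : ℝ} (h0 : 0 ≤ t) (h1 : t ≤ 1) :
    (1 - Real.exp (-1)) * t ≤ 1 - Real.exp (-t) := by
  have hc := convexOn_exp.2 (mem_univ (0:ℝ)) (mem_univ (-1:ℝ))
    (by linarith : (0:ℝ) ≤ 1 - t) h0 (by ring)
  simp only [smul_eq_mul, mul_zero, mul_neg, mul_one, zero_add, Real.exp_zero] at hc
  nlinarith [hc]

variable {q ψ : ℝ → ℝ} (hq_mono : MonotoneOn q (Set.Ici 0)) (hq_nonneg : ∀ x, 0 ≤ x → 0 ≤ q x)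
  (hψq : ∀ x, 0 ≤ x → ψ x = ∫ t in (0:ℝ)..x, q t)

include hq_mono in
lemma auxInt {u v : ℝ} (hu : 0 ≤ u) (huv : u ≤ v) : IntervalIntegrable q volume u v := by
  apply MonotoneOn.intervalIntegrable
  apply hq_mono.mono
  rw [Set.uIcc_of_le huv]
  intro t ht
  exact le_trans hu ht.1

include hq_mono hψq in
lemma auxSplit {u v : ℝ} (hu : 0 ≤ u) (huv : u ≤ v) :
    ψ v = ψ u + ∫ t in u..v, q t := by
  rw [hψq u hu, hψq v (hu.trans huv),
    ← intervalIntegral.integral_add_adjacent_intervals (auxInt hq_mono le_rfl hu)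
      (auxInt hq_mono hu huv)]

include hq_mono hq_nonneg hψq in
lemma auxMono {u v : ℝ} (hu : 0 ≤ u) (huv : u ≤ v) : ψ u ≤ ψ v := by
  rw [auxSplit hq_mono hψq hu huv]
  have : 0 ≤ ∫ t in u..v, q t := by
    apply intervalIntegral.integral_nonneg huv
    intro t ht
    exact hq_nonneg t (hu.trans ht.1)
  linarith

include hq_mono hψq in
lemma auxDiff {u v : ℝ} (hu : 0 ≤ u) (huv : u ≤ v) :
    ψ v ≤ ψ u + (v - u) * q v := by
  rw [auxSplit hq_mono hψq hu huv]
  have h1 : (∫ t in u..v, q t) ≤ ∫ _t in u..v, q v := by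
    apply intervalIntegral.integral_mono_on huv (auxInt hq_mono hu huv)
      (intervalIntegrable_const)
    intro t ht
    exact hq_mono (le_trans hu ht.1) (le_trans hu (ht.1.trans ht.2)) ht.2
  simp only [intervalIntegral.integral_const, smul_eq_mul] at h1
  linarith

end Helpers

lemma auxChernoff {Ω : Type*} [MeasurableSpace Ω] (P : Measure Ω) [IsProbabilityMeasure P]
    {φ : ℝ → ℝ} (hφ0 : φ 0 = 0) {X : Ω → ℝ} {a : ℝ} (ha : PhiMGF φ P X a)
    {x : ℝ} (hx : 0 < x) {s : ℝ} (hs : 0 ≤ s) :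
    P {ω | x < X ω} ≤ ENNReal.ofReal (Real.exp (φ s - (x / a) * s)) := by
  obtain ⟨ha0, hmg⟩ := ha
  rcases eq_or_lt_of_le hs with rfl | hs
  · simpa [hφ0] using (prob_le_one (μ := P) (s := {ω | x < X ω}))
  · set t := s / a with hts
    have ht : 0 < t := div_pos hs ha0
    obtain ⟨hint, hbd⟩ := hmg t
    have hsub : {ω | x < X ω} ⊆ {ω | Real.exp (t * x) ≤ Real.exp (t * X ω)} := by
      intro ω hω
      exact Real.exp_le_exp.2 (mul_le_mul_of_nonneg_left (le_of_lt hω) ht.le)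
    have hmark := mul_meas_ge_le_integral_of_nonneg
      (Filter.Eventually.of_forall fun ω => (Real.exp_pos _).le) hint (Real.exp (t * x))
    have hP1 : P {ω | x < X ω} ≤ P {ω' | Real.exp (t * x) ≤ Real.exp (t * X ω')} :=
      measure_mono hsub
    have hfin : P {ω' | Real.exp (t * x) ≤ Real.exp (t * X ω')} ≠ ⊤ := measure_ne_top _ _
    have hats : a * t = s := by rw [hts, mul_comm]; exact div_mul_cancel₀ s ha0.ne'
    have h2 : (P {ω' | Real.exp (t * x) ≤ Real.exp (t * X ω')}).toReal
        ≤ Real.exp (φ s - t * x) := by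
      rw [Real.exp_sub, le_div_iff₀ (Real.exp_pos _), mul_comm]
      calc Real.exp (t * x) * (P {ω' | Real.exp (t * x) ≤ Real.exp (t * X ω')}).toReal
          ≤ ∫ ω, Real.exp (t * X ω) ∂P := hmark
        _ ≤ Real.exp (φ (a * t)) := hbd
        _ = Real.exp (φ s) := by rw [hats]
    calc P {ω | x < X ω} ≤ P {ω' | Real.exp (t * x) ≤ Real.exp (t * X ω')} := hP1
      _ = ENNReal.ofReal (P {ω' | Real.exp (t * x) ≤ Real.exp (t * X ω')}).toReal :=
          (ENNReal.ofReal_toReal hfin).symm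
      _ ≤ ENNReal.ofReal (Real.exp (φ s - t * x)) := ENNReal.ofReal_le_ofReal h2
      _ = ENNReal.ofReal (Real.exp (φ s - (x / a) * s)) := by
          rw [hts]; ring_nf

lemma auxMGFup {Ω : Type*} [MeasurableSpace Ω] {P : Measure Ω}
    {φ : ℝ → ℝ} (hφeven : ∀ x, φ (-x) = φ x) (hφmono : MonotoneOn φ (Set.Ici 0))
    {X : Ω → ℝ} (hne : ∃ a, PhiMGF φ P X a)
    (hτ : sInf {a | PhiMGF φ P X a} = 1) {a' : ℝ} (ha' : 1 < a') : PhiMGF φ P X a' := by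
  have habs : ∀ u, φ u = φ |u| := by
    intro u
    rcases abs_cases u with ⟨h, _⟩ | ⟨h, _⟩
    · rw [h]
    · rw [h, hφeven]
  have hbdd : BddBelow {a | PhiMGF φ P X a} := ⟨0, fun a ha => ha.1.le⟩
  have := (csInf_lt_iff hbdd hne).1 (by rw [hτ]; exact ha')
  obtain ⟨a, ha, haa'⟩ := this
  refine ⟨lt_trans one_pos ha', fun t => ⟨(ha.2 t).1, le_trans (ha.2 t).2 ?_⟩⟩
  apply Real.exp_le_exp.2
  rw [habs (a * t), habs (a' * t), abs_mul, abs_mul, abs_of_pos ha.1,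
    abs_of_pos (lt_trans one_pos ha')]
  exact hφmono (Set.mem_Ici.2 (mul_nonneg ha.1.le (abs_nonneg t)))
    (Set.mem_Ici.2 (mul_nonneg (by linarith) (abs_nonneg t)))
    (mul_le_mul_of_nonneg_right haa'.le (abs_nonneg t))

set_option maxHeartbeats 1000000 in
/-- Theorem 5: sharpness of the convergence rate. Under a lower bound
`P(X_{k,n} > x) ≥ C exp(-κ(x))` with `exp(-κ(x)) ≥ C₁ exp(-B ψ(x))` for large `x` and a
growth bound on `q_φ`, for every `α < 2 - B(1 + C₂ ε)` the series
`Σ_{m,j} (mj)^{-α} P(Y⁺_{m,j} > ε)` diverges, where `a_{m,j} = ψ⁻¹(ln(mj))`. -/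
theorem sum_prob_pos_part_eq_top
    {Ω : Type*} [MeasurableSpace Ω] (P : Measure Ω) [IsProbabilityMeasure P]
    (φ ψ ψinv q : ℝ → ℝ) (hφ : IsOrliczN φ) (hψ : IsYoungFenchel φ ψ)
    (hq_mono : MonotoneOn q (Set.Ici 0)) (hq_nonneg : ∀ x, 0 ≤ x → 0 ≤ q x)
    (hψq : ∀ x, 0 ≤ x → ψ x = ∫ t in (0:ℝ)..x, q t)
    (hψinv : ∀ x, 0 ≤ x → 0 ≤ ψinv x ∧ ψ (ψinv x) = x)
    (X : ℕ → ℕ → Ω → ℝ)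
    (hsub : ∀ k n : ℕ, 1 ≤ k → 1 ≤ n → IsPhiSubGaussian φ P (X k n))
    (hτ : ∀ k n : ℕ, 1 ≤ k → 1 ≤ n → tauPhi φ P (X k n) = 1)
    (hindep : ProbabilityTheory.iIndepFun
      (fun p : ℕ × ℕ => X p.1 p.2) P)
    -- (i) lower bound on the right tail:
    (κ : ℝ → ℝ) (hκ_pos : ∀ x, 0 < x → 0 < κ x) (hκ_mono : StrictMonoOn κ (Set.Ioi 0))
    (C : ℝ) (hC : 0 < C)
    (htail : ∀ k n : ℕ, 1 ≤ k → 1 ≤ n → ∀ x : ℝ, 0 < x →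
      ENNReal.ofReal (C * Real.exp (-κ x)) ≤ P {ω | x < X k n ω})
    -- (ii) comparison of `κ` and `ψ`:
    (x₀ B C₁ : ℝ) (hx₀ : 0 < x₀) (hB : 0 < B) (hC₁ : 0 < C₁)
    (hκψ : ∀ x : ℝ, x₀ ≤ x → C₁ * Real.exp (-(B * ψ x)) ≤ Real.exp (-κ x))
    -- (iii) growth bound on `q_φ`:
    (ε C₂ : ℝ) (hε : 0 < ε) (hC₂ : ∀ x : ℝ, x₀ < x → q (x + ε) / ψ x ≤ C₂) :
    ∀ α : ℝ, α < 2 - B * (1 + C₂ * ε) →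
    (∑' m : ℕ, ∑' j : ℕ,
      ENNReal.ofReal (((((m + 1) * (j + 1) : ℕ)) : ℝ) ^ (-α)) *
        P {ω | ε < max (runMax X (m + 1) (j + 1) ω
          - ψinv (Real.log ((((m + 1) * (j + 1) : ℕ)) : ℝ))) 0}) = ⊤ := by
  intro α hα
  set β : ℝ := B * (1 + C₂ * ε) with hβdef
  have hψ0 : ψ 0 = 0 := by rw [hψq 0 le_rfl]; simp
  have hψ_mono : ∀ u v : ℝ, 0 ≤ u → u ≤ v → ψ u ≤ ψ v :=
    fun u v hu huv => auxMono hq_mono hq_nonneg hψq hu huv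
  have hψ_nonneg : ∀ x : ℝ, 0 ≤ x → 0 ≤ ψ x := by
    intro x hx
    have := hψ_mono 0 x le_rfl hx
    rwa [hψ0] at this
  have hψinv_gt : ∀ M t : ℝ, 0 ≤ M → ψ M < t → 0 ≤ t → M < ψinv t := by
    intro M t hM hMt ht
    by_contra h
    push_neg at h
    have h2 : ψ (ψinv t) ≤ ψ M := hψ_mono _ _ (hψinv t ht).1 h
    rw [(hψinv t ht).2] at h2
    linarith
  have hmeas : ∀ k n : ℕ, 1 ≤ k → 1 ≤ n → AEMeasurable (X k n) P := by
    intro k n hk hn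
    obtain ⟨-, -, a, -, hmg⟩ := hsub k n hk hn
    have h1 : AEMeasurable (fun ω => Real.exp (1 * X k n ω)) P := (hmg 1).1.aemeasurable
    have h2 := Real.measurable_log.comp_aemeasurable h1
    refine h2.congr (Filter.Eventually.of_forall fun ω => ?_)
    simp [Real.log_exp]
  have hφmono : MonotoneOn φ (Set.Ici 0) := hφ.strictMonoOn.monotoneOn
  have hMGF : ∀ a : ℝ, 1 < a → PhiMGF φ P (X 1 1) a := by
    intro a ha
    exact auxMGFup hφ.even hφmono ((hsub 1 1 le_rfl le_rfl).2.2)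
      (hτ 1 1 le_rfl le_rfl) ha
  -- ψ is controlled by κ via the Chernoff bound
  have hψκ : ∀ x : ℝ, x₀ ≤ x → ψ x ≤ 1 + (κ x - Real.log C) := by
    intro x hx
    have hx0 : 0 < x := lt_of_lt_of_le hx₀ hx
    have hqx : 0 ≤ q x := hq_nonneg x hx0.le
    have hden : (0:ℝ) < x * q x + 1 := by positivity
    set δ : ℝ := 1 / (x * q x + 1) with hδdef
    have hδ : 0 < δ := by positivity
    set a : ℝ := 1 + δ with hadef
    have ha : 1 < a := by simp only [hadef]; linarith
    have ha0 : 0 < a := lt_trans one_pos ha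
    have hx' : 0 ≤ x / a := by positivity
    have hx'x : x / a ≤ x := by
      rw [div_le_iff₀ ha0]
      nlinarith
    have h1 : ψ x ≤ ψ (x / a) + 1 := by
      have hd := auxDiff hq_mono hψq hx' hx'x
      have hxa : x - x / a = x * δ / a := by field_simp; ring
      have h3 : x * δ / a ≤ x * δ := div_le_self (by positivity) (by linarith)
      have h4 : x * δ * q x ≤ 1 := by
        have he : x * δ * q x = x * q x / (x * q x + 1) := by rw [hδdef]; ring
        rw [he, div_le_one hden]
        linarith
      have h5 : (x - x / a) * q x ≤ 1 := by
        rw [hxa]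
        nlinarith
      linarith
    have h2 : ψ (x / a) ≤ κ x - Real.log C := by
      apply (hψ (x / a)).2
      rintro z ⟨y, rfl⟩
      have hch := auxChernoff P hφ.map_zero (hMGF a ha) hx0 (abs_nonneg y)
      have hle := le_trans (htail 1 1 le_rfl le_rfl x hx0) hch
      rw [ENNReal.ofReal_le_ofReal_iff (Real.exp_pos _).le] at hle
      have hlog := Real.log_le_log (by positivity) hle
      rw [Real.log_mul (ne_of_gt hC) (ne_of_gt (Real.exp_pos _)), Real.log_exp,
        Real.log_exp] at hlog
      have heven : φ y = φ |y| := by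
        rcases abs_cases y with ⟨h, _⟩ | ⟨h, _⟩
        · rw [h]
        · rw [h, hφ.even]
      have hyabs : x / a * y ≤ x / a * |y| :=
        mul_le_mul_of_nonneg_left (le_abs_self y) hx'
      rw [← heven] at hlog
      linarith
    linarith
  have hB1 : 1 ≤ B := by
    by_contra hB1
    push_neg at hB1
    have hκB : ∀ x : ℝ, x₀ ≤ x → κ x ≤ B * ψ x - Real.log C₁ := by
      intro x hx
      have hlog := Real.log_le_log (by positivity) (hκψ x hx)
      rw [Real.log_mul (ne_of_gt hC₁) (ne_of_gt (Real.exp_pos _)), Real.log_exp,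
        Real.log_exp] at hlog
      linarith
    set D : ℝ := (1 - Real.log C - Real.log C₁) / (1 - B) with hD
    have hDbound : ∀ x : ℝ, x₀ ≤ x → ψ x ≤ D := by
      intro x hx
      have h1 := hψκ x hx
      have h2 := hκB x hx
      rw [hD, le_div_iff₀ (by linarith : (0:ℝ) < 1 - B)]
      nlinarith
    set t : ℝ := max (ψ x₀) 0 + |D| + 1 with ht
    have ht0 : 0 ≤ t := by
      have := le_max_right (ψ x₀) 0
      have := abs_nonneg D
      simp only [ht]; linarith
    have hx : x₀ < ψinv t := by
      apply hψinv_gt x₀ t hx₀.le _ ht0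
      have := le_max_left (ψ x₀) 0
      have := abs_nonneg D
      simp only [ht]; linarith
    have hb := hDbound (ψinv t) hx.le
    rw [(hψinv t ht0).2] at hb
    have h1 := le_abs_self D
    have h2 := le_max_right (ψ x₀) 0
    simp only [ht] at hb
    linarith
  have hC₂0 : 0 ≤ C₂ := by
    set t : ℝ := max (ψ x₀) 0 + 1 with ht
    have hmr := le_max_right (ψ x₀) 0
    have hml := le_max_left (ψ x₀) 0
    have ht0 : 0 ≤ t := by simp only [ht]; linarith
    have hx : x₀ < ψinv t := hψinv_gt x₀ t hx₀.le (by simp only [ht]; linarith) ht0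
    have h1 := hC₂ (ψinv t) hx
    have h2 : 0 ≤ q (ψinv t + ε) / ψ (ψinv t) := by
      apply div_nonneg (hq_nonneg _ (by nlinarith [(hψinv t ht0).1]))
      rw [(hψinv t ht0).2]; exact ht0
    linarith
  have hβ1 : 1 ≤ β := by
    have : 0 ≤ C₂ * ε := mul_nonneg hC₂0 hε.le
    simp only [hβdef]; nlinarith
  set c₀ : ℝ := min (C * C₁) 1 with hc₀
  have hc₀pos : 0 < c₀ := lt_min (by positivity) one_pos
  have hc₀le1 : c₀ ≤ 1 := min_le_right _ _
  have hexp1 : Real.exp (-1) < 1 := by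
    rw [← Real.exp_zero]
    exact Real.exp_lt_exp.2 (by norm_num)
  set c : ℝ := (1 - Real.exp (-1)) * c₀ with hc
  have hcpos : 0 < c := mul_pos (by linarith) hc₀pos
  set T : ℝ := max (ψ x₀) 0 + 1 with hT
  set K : ℕ := ⌈Real.exp T⌉₊ + 1 with hK
  have key : ∀ J : ℕ, K ≤ J →
      ENNReal.ofReal (c * (J : ℝ)⁻¹) ≤
        ENNReal.ofReal ((J : ℝ) ^ (-α)) *
          P {ω | ε < max (runMax X 1 J ω - ψinv (Real.log (J : ℝ))) 0} := by
    intro J hJ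
    have hJ1 : 1 ≤ J := le_trans (by omega) hJ
    have hJpos : (0:ℝ) < (J:ℝ) := by exact_mod_cast Nat.lt_of_lt_of_le Nat.zero_lt_one hJ1
    have hT1 : (1:ℝ) ≤ T := by
      have := le_max_right (ψ x₀) 0
      simp only [hT]; linarith
    have hJR : Real.exp T ≤ (J : ℝ) := by
      calc Real.exp T ≤ (⌈Real.exp T⌉₊ : ℝ) := Nat.le_ceil _
        _ ≤ (J : ℝ) := by exact_mod_cast le_trans (by omega) hJ
    have hJR1 : 1 < (J : ℝ) := by
      have h1 : Real.exp 0 < Real.exp T := Real.exp_lt_exp.2 (by linarith)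
      rw [Real.exp_zero] at h1
      linarith
    have hlogJ : T ≤ Real.log (J : ℝ) := by
      rw [← Real.log_exp T]
      exact Real.log_le_log (Real.exp_pos T) hJR
    have hlogpos : 0 < Real.log (J : ℝ) := by linarith
    set av : ℝ := ψinv (Real.log (J : ℝ)) with hav
    have hav0 : 0 ≤ av := (hψinv _ hlogpos.le).1
    have hψav : ψ av = Real.log (J : ℝ) := (hψinv _ hlogpos.le).2
    have havx₀ : x₀ < av := by
      apply hψinv_gt x₀ _ hx₀.le _ hlogpos.le
      have := le_max_left (ψ x₀) 0
      simp only [hT] at hlogJ; linarith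
    have hqbound : q (av + ε) ≤ C₂ * Real.log (J : ℝ) := by
      have h1 := hC₂ av havx₀
      rw [hψav, div_le_iff₀ hlogpos] at h1
      linarith
    have hψavε : ψ (av + ε) ≤ (1 + C₂ * ε) * Real.log (J : ℝ) := by
      have h1 := auxDiff hq_mono hψq hav0 (by linarith : av ≤ av + ε)
      rw [hψav] at h1
      nlinarith
    set pr : ℝ := C * C₁ * (J : ℝ) ^ (-β) with hpr
    have hrpos : (0:ℝ) < (J : ℝ) ^ (-β) := Real.rpow_pos_of_pos hJpos _
    have hprpos : 0 < pr := mul_pos (mul_pos hC hC₁) hrpos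
    have hple : ∀ k n : ℕ, 1 ≤ k → 1 ≤ n →
        ENNReal.ofReal pr ≤ P {ω | av + ε < X k n ω} := by
      intro k n hk hn
      refine le_trans ?_ (htail k n hk hn (av + ε) (by linarith))
      apply ENNReal.ofReal_le_ofReal
      have h1 := hκψ (av + ε) (by linarith)
      have h2 : (J : ℝ) ^ (-β) ≤ Real.exp (-(B * ψ (av + ε))) := by
        rw [Real.rpow_def_of_pos hJpos]
        apply Real.exp_le_exp.2
        have h3 : B * ψ (av + ε) ≤ β * Real.log (J : ℝ) := by
          simp only [hβdef]
          have := mul_le_mul_of_nonneg_left hψavε hB.le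
          linarith [this]
        nlinarith
      have hCC : 0 < C * C₁ := mul_pos hC hC₁
      calc C * C₁ * (J : ℝ) ^ (-β) ≤ C * (C₁ * Real.exp (-(B * ψ (av + ε)))) := by
            nlinarith
        _ ≤ C * Real.exp (-κ (av + ε)) := by nlinarith [h1, Real.exp_pos (-κ (av + ε))]
    have hpr1 : pr ≤ 1 := by
      have h2 := le_trans (hple 1 1 le_rfl le_rfl) prob_le_one
      rw [← ENNReal.ofReal_one] at h2
      exact (ENNReal.ofReal_le_ofReal_iff zero_le_one).1 h2
    set q0 : ℝ := c₀ * (J : ℝ) ^ (-β) with hq0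
    have hq0pos : 0 < q0 := mul_pos hc₀pos hrpos
    have hq0pr : q0 ≤ pr := mul_le_mul_of_nonneg_right (min_le_left _ _) hrpos.le
    have hq0le1 : q0 ≤ 1 := le_trans hq0pr hpr1
    have hJq0 : (J : ℝ) * q0 ≤ 1 := by
      have h1 : (J : ℝ) * (J : ℝ) ^ (-β) = (J : ℝ) ^ (1 + -β) := by
        rw [Real.rpow_add hJpos, Real.rpow_one]
      have h2 : (J : ℝ) ^ (1 + -β) ≤ (J : ℝ) ^ (0 : ℝ) :=
        Real.rpow_le_rpow_of_exponent_le hJR1.le (by linarith)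
      rw [Real.rpow_zero] at h2
      calc (J : ℝ) * q0 = c₀ * ((J : ℝ) * (J : ℝ) ^ (-β)) := by rw [hq0]; ring
        _ ≤ 1 * 1 := by rw [h1]; exact mul_le_mul hc₀le1 h2 (by positivity) zero_le_one
        _ = 1 := mul_one 1
    set cv : ℝ := av + ε with hcv
    set F : Finset (ℕ × ℕ) := Finset.Icc 1 1 ×ˢ Finset.Icc 1 J with hF
    have hFcard : F.card = J := by
      rw [hF, Finset.card_product, Nat.card_Icc, Nat.card_Icc]
      simp
    have hmemF : ∀ p : ℕ × ℕ, p ∈ F ↔ (1 ≤ p.1 ∧ p.1 ≤ 1) ∧ 1 ≤ p.2 ∧ p.2 ≤ J := by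
      intro p; rw [hF, Finset.mem_product, Finset.mem_Icc, Finset.mem_Icc]
    set E : Set Ω := {ω | ε < max (runMax X 1 J ω - av) 0} with hE
    have hSfin : ∀ ω : Ω, Set.Finite {y | ∃ k n, 1 ≤ k ∧ k ≤ 1 ∧ 1 ≤ n ∧ n ≤ J ∧ y = X k n ω} := by
      intro ω
      apply Set.Finite.subset (F.finite_toSet.image (fun p : ℕ × ℕ => X p.1 p.2 ω))
      rintro y ⟨k, n, hk1, hk2, hn1, hn2, rfl⟩
      exact ⟨(k, n), by rw [Finset.mem_coe, hmemF]; exact ⟨⟨hk1, hk2⟩, hn1, hn2⟩, rfl⟩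
    have hSne : ∀ ω : Ω, (X 1 1 ω) ∈ {y | ∃ k n, 1 ≤ k ∧ k ≤ 1 ∧ 1 ≤ n ∧ n ≤ J ∧ y = X k n ω} :=
      fun ω => ⟨1, 1, le_rfl, le_rfl, le_rfl, hJ1, rfl⟩
    have hEc : Eᶜ = ⋂ p ∈ F, X p.1 p.2 ⁻¹' Set.Iic cv := by
      ext ω
      simp only [hE, Set.mem_compl_iff, Set.mem_setOf_eq, not_lt, Set.mem_iInter,
        Set.mem_preimage, Set.mem_Iic]
      constructor
      · intro h p hp
        have h1 : runMax X 1 J ω - av ≤ ε := le_trans (le_max_left _ _) h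
        rw [hmemF] at hp
        have hrm : X p.1 p.2 ω ≤ runMax X 1 J ω := by
          apply le_csSup (hSfin ω).bddAbove
          exact ⟨p.1, p.2, hp.1.1, hp.1.2, hp.2.1, hp.2.2, rfl⟩
        simp only [hcv]; linarith
      · intro h
        rw [max_le_iff]
        refine ⟨?_, hε.le⟩
        have hsup : runMax X 1 J ω ≤ cv := by
          apply csSup_le ⟨_, hSne ω⟩
          rintro y ⟨k, n, hk1, hk2, hn1, hn2, rfl⟩
          exact h (k, n) ((hmemF (k, n)).2 ⟨⟨hk1, hk2⟩, hn1, hn2⟩)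
        simp only [hcv] at hsup; linarith
    have hprod : P (⋂ p ∈ F, X p.1 p.2 ⁻¹' Set.Iic cv) =
        ∏ p ∈ F, P (X p.1 p.2 ⁻¹' Set.Iic cv) :=
      hindep.measure_inter_preimage_eq_mul F (fun p _ => measurableSet_Iic)
    have hfac : ∀ p : ℕ × ℕ, p ∈ F → (P (X p.1 p.2 ⁻¹' Set.Iic cv)).toReal ≤ 1 - q0 := by
      intro p hp
      rw [hmemF] at hp
      have hnm : NullMeasurableSet (X p.1 p.2 ⁻¹' Set.Ioi cv) P :=
        (hmeas p.1 p.2 hp.1.1 hp.2.1).nullMeasurable measurableSet_Ioi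
      have hcompl : (X p.1 p.2 ⁻¹' Set.Ioi cv)ᶜ = X p.1 p.2 ⁻¹' Set.Iic cv := by
        rw [← Set.preimage_compl, Set.compl_Ioi]
      have h1 : P (X p.1 p.2 ⁻¹' Set.Iic cv) = 1 - P (X p.1 p.2 ⁻¹' Set.Ioi cv) := by
        rw [← hcompl, measure_compl₀ hnm (measure_ne_top _ _), measure_univ]
      have h2 : ENNReal.ofReal pr ≤ P (X p.1 p.2 ⁻¹' Set.Ioi cv) := by
        have h3 := hple p.1 p.2 hp.1.1 hp.2.1
        have h4 : {ω | av + ε < X p.1 p.2 ω} = X p.1 p.2 ⁻¹' Set.Ioi cv := by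
          ext ω; simp [Set.mem_Ioi, hcv]
        rwa [h4] at h3
      have h3 : pr ≤ (P (X p.1 p.2 ⁻¹' Set.Ioi cv)).toReal := by
        have h5 := ENNReal.toReal_mono (measure_ne_top _ _) h2
        rwa [ENNReal.toReal_ofReal hprpos.le] at h5
      rw [h1, ENNReal.toReal_sub_of_le prob_le_one ENNReal.one_ne_top, ENNReal.toReal_one]
      linarith
    have hEc_le : (P Eᶜ).toReal ≤ (1 - q0) ^ J := by
      rw [hEc, hprod, ENNReal.toReal_prod]
      calc (∏ p ∈ F, (P (X p.1 p.2 ⁻¹' Set.Iic cv)).toReal)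
          ≤ ∏ _p ∈ F, (1 - q0) :=
            Finset.prod_le_prod (fun p _ => ENNReal.toReal_nonneg) hfac
        _ = (1 - q0) ^ J := by rw [Finset.prod_const, hFcard]
    have hPE : 1 - (1 - q0) ^ J ≤ (P E).toReal := by
      have h1 : (1 : ENNReal) ≤ P E + P Eᶜ := by
        rw [← measure_univ (μ := P)]
        exact measure_univ_le_add_compl E
      have h2 : (1 : ℝ) ≤ (P E).toReal + (P Eᶜ).toReal := by
        have h3 := ENNReal.toReal_mono
          (ENNReal.add_ne_top.2 ⟨measure_ne_top _ _, measure_ne_top _ _⟩) h1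
        rwa [ENNReal.toReal_add (measure_ne_top _ _) (measure_ne_top _ _),
          ENNReal.toReal_one] at h3
      linarith
    have hexp : (1 - q0) ^ J ≤ Real.exp (-((J : ℝ) * q0)) := by
      have h1 : 1 - q0 ≤ Real.exp (-q0) := by nlinarith [Real.add_one_le_exp (-q0)]
      calc (1 - q0) ^ J ≤ Real.exp (-q0) ^ J := pow_le_pow_left₀ (by linarith) h1 J
        _ = Real.exp (-((J : ℝ) * q0)) := by
            rw [← Real.exp_nat_mul]; ring_nf
    have hPE2 : c * (J : ℝ) ^ (1 - β) ≤ (P E).toReal := by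
      have h1 := auxA (by positivity : (0:ℝ) ≤ (J : ℝ) * q0) hJq0
      have h2 : (1 - Real.exp (-1)) * ((J : ℝ) * q0) = c * (J : ℝ) ^ (1 - β) := by
        rw [hc, hq0, show (1 : ℝ) - β = 1 + -β from by ring, Real.rpow_add hJpos,
          Real.rpow_one]
        ring
      nlinarith [hPE, hexp, h1]
    have hfinR : c * (J : ℝ)⁻¹ ≤ (J : ℝ) ^ (-α) * (P E).toReal := by
      have hpow : (J : ℝ) ^ (-(1:ℝ)) ≤ (J : ℝ) ^ (1 - β + -α) :=
        Real.rpow_le_rpow_of_exponent_le hJR1.le (by simp only [hβdef] at *; linarith)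
      have h2 : (J : ℝ) ^ (1 - β + -α) = (J : ℝ) ^ (-α) * (J : ℝ) ^ (1 - β) := by
        rw [← Real.rpow_add hJpos]; ring_nf
      have h3 : (J : ℝ) ^ (-(1:ℝ)) = (J : ℝ)⁻¹ := by
        rw [Real.rpow_neg hJpos.le, Real.rpow_one]
      have h4 : (J : ℝ) ^ (-α) * (c * (J : ℝ) ^ (1 - β)) ≤ (J : ℝ) ^ (-α) * (P E).toReal :=
        mul_le_mul_of_nonneg_left hPE2 (Real.rpow_nonneg hJpos.le _)
      calc c * (J : ℝ)⁻¹ = c * (J : ℝ) ^ (-(1:ℝ)) := by rw [h3]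
        _ ≤ c * ((J : ℝ) ^ (-α) * (J : ℝ) ^ (1 - β)) := by
            rw [← h2]; exact mul_le_mul_of_nonneg_left hpow hcpos.le
        _ = (J : ℝ) ^ (-α) * (c * (J : ℝ) ^ (1 - β)) := by ring
        _ ≤ _ := h4
    calc ENNReal.ofReal (c * (J : ℝ)⁻¹)
        ≤ ENNReal.ofReal ((J : ℝ) ^ (-α) * (P E).toReal) := ENNReal.ofReal_le_ofReal hfinR
      _ = ENNReal.ofReal ((J : ℝ) ^ (-α)) * ENNReal.ofReal (P E).toReal :=
          ENNReal.ofReal_mul (Real.rpow_nonneg hJpos.le _)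
      _ = ENNReal.ofReal ((J : ℝ) ^ (-α)) * P E := by
          rw [ENNReal.ofReal_toReal (measure_ne_top _ _)]

  have hharm : (∑' i : ℕ, ENNReal.ofReal (c * (((i + K + 1 : ℕ) : ℝ))⁻¹)) = ⊤ := by
    by_contra h
    have hsum := ENNReal.summable_toReal h
    have hsum2 : Summable (fun i : ℕ => c * (((i + K + 1 : ℕ) : ℝ))⁻¹) := by
      refine hsum.congr fun i => ?_
      exact ENNReal.toReal_ofReal (by positivity)
    have hsum3 : Summable (fun i : ℕ => (((i + K + 1 : ℕ) : ℝ))⁻¹) := by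
      have h2 := hsum2.mul_left c⁻¹
      refine h2.congr fun i => ?_
      field_simp
    have hsum4 : Summable (fun n : ℕ => ((n : ℕ) : ℝ)⁻¹) := by
      have h3 : Summable (fun i : ℕ => (((i + (K + 1) : ℕ) : ℝ))⁻¹) := hsum3
      exact (summable_nat_add_iff (K + 1)).1 h3
    exact Real.not_summable_natCast_inv hsum4
  rw [← top_le_iff]
  refine le_trans ?_ (ENNReal.le_tsum 0)
  refine le_trans ?_ (ENNReal.tsum_comp_le_tsum_of_injective (add_left_injective K)
    (fun j : ℕ => ENNReal.ofReal (((((0 + 1) * (j + 1) : ℕ)) : ℝ) ^ (-α)) *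
      P {ω | ε < max (runMax X (0 + 1) (j + 1) ω
        - ψinv (Real.log ((((0 + 1) * (j + 1) : ℕ)) : ℝ))) 0}))
  rw [← hharm]
  apply ENNReal.tsum_le_tsum
  intro i
  have := key (i + K + 1) (by omega)
  simpa only [zero_add, one_mul] using this
end

section
/- Let {X_{k,n} : k,n ≥ 1} be a double array of φ-subgaussian random variables with τ_φ(X_{k,n}) > 0 for all k,n, let g : [0,∞) → (0,∞) be non-decreasing, and let a_{m,j} = g(ln(mj)) ψ^{−1}(ln(mj)). Let f : [1,∞) → ℝ satisfy g(ln(mj)) / τ_φ(X_{k,n}) ≥ f(mj/(kn)) ≥ 1 for all m,j ≥ 1, 1 ≤ k ≤ m, 1 ≤ n ≤ j. Then for all m,j ≥ 1, P(Y⁺_{m,j} > 0) ≤ Σ_{k=1}^m Σ_{n=1}^j (mj)^{−f(mj/(kn))}. -/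
open MeasureTheory Real Filter Set

lemma phi_nonneg {φ : ℝ → ℝ} (hφ : IsOrliczN φ) (y : ℝ) : 0 ≤ φ y := by
  have key : ∀ z : ℝ, 0 ≤ z → 0 ≤ φ z := by
    intro z hz
    rcases eq_or_lt_of_le hz with h0 | h0
    · simp [← h0, hφ.map_zero]
    · have := hφ.strictMonoOn (Set.mem_Ici.2 le_rfl) (Set.mem_Ici.2 hz) h0
      simpa [hφ.map_zero] using this.le
  rcases le_or_gt 0 y with h | h
  · exact key y h
  · rw [← hφ.even]; exact key (-y) (by linarith)

lemma phi_abs {φ : ℝ → ℝ} (hφ : IsOrliczN φ) (y : ℝ) : φ |y| = φ y := by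
  rcases abs_cases y with ⟨h, _⟩ | ⟨h, _⟩
  · rw [h]
  · rw [h, hφ.even]

/-- Chernoff-type bound for φ-subgaussian tails. -/
lemma chernoff_phi {Ω : Type*} [MeasurableSpace Ω] (P : Measure Ω) [IsProbabilityMeasure P]
    (φ ψ : ℝ → ℝ) (hφ : IsOrliczN φ) (hψ : IsYoungFenchel φ ψ)
    (X : Ω → ℝ) (hX : ∃ a, PhiMGF φ P X a) (hτ : 0 < tauPhi φ P X)
    (a : ℝ) (ha : 0 ≤ a) :
    P {ω | a < X ω} ≤ ENNReal.ofReal (Real.exp (-ψ (a / tauPhi φ P X))) := by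
  set τ := tauPhi φ P X with hτdef
  set x := a / τ with hxdef
  have hx : 0 ≤ x := div_nonneg ha hτ.le
  have hfin : P {ω | a < X ω} ≠ ⊤ := measure_ne_top _ _
  rw [← ENNReal.ofReal_toReal hfin]
  apply ENNReal.ofReal_le_ofReal
  set p := (P {ω | a < X ω}).toReal with hpdef
  -- reduce to ∀ ε > 0
  have H : ∀ ε : ℝ, 0 < ε → p ≤ Real.exp (-ψ x + ε) := by
    intro ε hε
    -- choose s ≥ 0 with x * s - φ s > ψ x - ε/2
    obtain ⟨z, ⟨s₀, hs₀⟩, hz⟩ := (hψ x).exists_between (by linarith : ψ x - ε/2 < ψ x)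
    set s := |s₀| with hsdef
    have hs : 0 ≤ s := abs_nonneg _
    have hkey : ψ x - ε/2 < x * s - φ s := by
      have h1 : x * s₀ ≤ x * s := mul_le_mul_of_nonneg_left (le_abs_self s₀) hx
      have h2 : φ s = φ s₀ := phi_abs hφ s₀
      have := hz.1
      rw [hs₀] at this
      linarith
    set t := s / τ with htdef
    have ht : 0 ≤ t := div_nonneg hs hτ.le
    have hτt : τ * t = s := by rw [htdef]; field_simp
    have hta : t * a = x * s := by rw [htdef, hxdef, div_mul_eq_mul_div, div_mul_eq_mul_div, mul_comm s a]
    -- continuity of b ↦ φ (b * t) at τ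
    have hcont : ContinuousAt (fun b => φ (b * t)) τ :=
      (hφ.continuous.comp (continuous_mul_right t)).continuousAt
    obtain ⟨δ, hδ, hδ2⟩ := Metric.continuousAt_iff.mp hcont (ε/2) (by linarith)
    -- pick a' ∈ S with a' < τ + δ
    have hne : {b | PhiMGF φ P X b}.Nonempty := hX
    have hbdd : BddBelow {b | PhiMGF φ P X b} := ⟨0, fun b hb => hb.1.le⟩
    obtain ⟨a', ha', haδ⟩ := exists_lt_of_csInf_lt hne (lt_add_of_pos_right τ hδ)
    have hτa' : τ ≤ a' := csInf_le hbdd ha'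
    have hdist : dist a' τ < δ := by
      rw [Real.dist_eq, abs_of_nonneg (by linarith)]; linarith
    have hφbound : φ (a' * t) < φ (τ * t) + ε/2 := by
      have := hδ2 hdist
      rw [Real.dist_eq] at this
      have := abs_lt.mp this
      linarith [this.1, this.2]
    -- Markov / Chernoff
    obtain ⟨_, hmgf⟩ := ha'
    obtain ⟨hint, hbd⟩ := hmgf t
    have hmono : P {ω | a < X ω} ≤ P {ω | a ≤ X ω} :=
      measure_mono (Set.setOf_subset_setOf.mpr (fun ω => le_of_lt))
    have hcher := ProbabilityTheory.measure_ge_le_exp_mul_mgf (X := X) (μ := P) a ht hint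
    have hmgfle : ProbabilityTheory.mgf X P t ≤ Real.exp (φ (a' * t)) := hbd
    have hp1 : p ≤ Real.exp (-t * a) * Real.exp (φ (a' * t)) := by
      have h1 : p ≤ (P {ω | a ≤ X ω}).toReal := by
        apply ENNReal.toReal_mono (measure_ne_top _ _) hmono
      calc p ≤ (P {ω | a ≤ X ω}).toReal := h1
        _ ≤ Real.exp (-t * a) * ProbabilityTheory.mgf X P t := hcher
        _ ≤ Real.exp (-t * a) * Real.exp (φ (a' * t)) := by
            exact mul_le_mul_of_nonneg_left hmgfle (Real.exp_nonneg _)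
    calc p ≤ Real.exp (-t * a) * Real.exp (φ (a' * t)) := hp1
      _ = Real.exp (φ (a' * t) - t * a) := by rw [← Real.exp_add]; ring_nf
      _ ≤ Real.exp (φ (τ * t) + ε/2 - t * a) := by
          apply Real.exp_le_exp.mpr; linarith
      _ = Real.exp (φ s + ε/2 - x * s) := by rw [hτt, hta]
      _ ≤ Real.exp (-ψ x + ε) := by
          apply Real.exp_le_exp.mpr; linarith
  -- conclude
  apply le_of_forall_gt_imp_ge_of_dense
  intro c hc
  have hc0 : Real.exp (-ψ x) < c := hc
  have hcpos : 0 < c := lt_trans (Real.exp_pos _) hc0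
  have hlog : -ψ x < Real.log c := (Real.lt_log_iff_exp_lt hcpos).mpr hc0
  have := H (Real.log c - (-ψ x)) (by linarith)
  calc p ≤ Real.exp (-ψ x + (Real.log c - (-ψ x))) := this
    _ = c := by rw [show -ψ x + (Real.log c - (-ψ x)) = Real.log c by ring, Real.exp_log hcpos]

/-- under the assumptions of Theorem 4, for all `m, j ≥ 1`,
`P(Y⁺_{m,j} > 0) ≤ Σ_{k=1}^m Σ_{n=1}^j (mj)^{-f(mj/(kn))}`, where
`a_{m,j} = g(ln(mj)) ψ⁻¹(ln(mj))`. -/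
theorem prob_pos_part_le_sum
    {Ω : Type*} [MeasurableSpace Ω] (P : Measure Ω) [IsProbabilityMeasure P]
    (φ ψ ψinv g : ℝ → ℝ) (hφ : IsOrliczN φ) (hψ : IsYoungFenchel φ ψ)
    (hψinv : ∀ x, 0 ≤ x → 0 ≤ ψinv x ∧ ψ (ψinv x) = x)
    (hg_mono : MonotoneOn g (Set.Ici 0)) (hg_pos : ∀ x, 0 ≤ x → 0 < g x)
    (X : ℕ → ℕ → Ω → ℝ)
    (hsub : ∀ k n : ℕ, 1 ≤ k → 1 ≤ n → IsPhiSubGaussian φ P (X k n))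
    (hτpos : ∀ k n : ℕ, 1 ≤ k → 1 ≤ n → 0 < tauPhi φ P (X k n))
    (f : ℝ → ℝ)
    (hf : ∀ m j k n : ℕ, 1 ≤ k → k ≤ m → 1 ≤ n → n ≤ j →
      1 ≤ f (((m * j : ℕ) : ℝ) / ((k * n : ℕ) : ℝ)) ∧
      f (((m * j : ℕ) : ℝ) / ((k * n : ℕ) : ℝ))
        ≤ g (Real.log ((m * j : ℕ) : ℝ)) / tauPhi φ P (X k n)) :
    ∀ m j : ℕ, 1 ≤ m → 1 ≤ j →
      P {ω | 0 < max (runMax X m j ω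
          - g (Real.log ((m * j : ℕ) : ℝ)) * ψinv (Real.log ((m * j : ℕ) : ℝ))) 0}
        ≤ ENNReal.ofReal (∑ k ∈ Finset.Icc 1 m, ∑ n ∈ Finset.Icc 1 j,
            ((m * j : ℕ) : ℝ) ^ (-f (((m * j : ℕ) : ℝ) / ((k * n : ℕ) : ℝ)))) := by
  intro m j hm hj
  have hmj : 1 ≤ m * j := Nat.one_le_iff_ne_zero.mpr (by positivity)
  have hmjR : (1 : ℝ) ≤ ((m * j : ℕ) : ℝ) := by exact_mod_cast hmj
  have hmjpos : (0 : ℝ) < ((m * j : ℕ) : ℝ) := lt_of_lt_of_le one_pos hmjR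
  set L := Real.log ((m * j : ℕ) : ℝ) with hLdef
  have hL : 0 ≤ L := Real.log_nonneg hmjR
  obtain ⟨hu, hψu⟩ := hψinv L hL
  set u := ψinv L with hudef
  set A := g L * u with hAdef
  have hA0 : 0 ≤ A := mul_nonneg (hg_pos L hL).le hu
  -- event inclusion
  have hincl : {ω | 0 < max (runMax X m j ω - A) 0}
      ⊆ ⋃ k ∈ Finset.Icc 1 m, ⋃ n ∈ Finset.Icc 1 j, {ω | A < X k n ω} := by
    intro ω hω
    simp only [Set.mem_setOf_eq, lt_max_iff, lt_irrefl, or_false, sub_pos] at hω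
    by_contra hc
    simp only [Set.mem_iUnion, Finset.mem_Icc, Set.mem_setOf_eq, not_exists, not_and,
      not_lt] at hc
    have hne : {y | ∃ k n, 1 ≤ k ∧ k ≤ m ∧ 1 ≤ n ∧ n ≤ j ∧ y = X k n ω}.Nonempty :=
      ⟨X 1 1 ω, 1, 1, le_rfl, hm, le_rfl, hj, rfl⟩
    have hle : runMax X m j ω ≤ A := by
      apply csSup_le hne
      rintro y ⟨k, n, h1, h2, h3, h4, rfl⟩
      exact hc k ⟨h1, h2⟩ n ⟨h3, h4⟩
    exact absurd hω (not_lt.mpr hle)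
  refine le_trans (measure_mono hincl) ?_
  -- pointwise Chernoff bound
  have hterm : ∀ k n : ℕ, k ∈ Finset.Icc 1 m → n ∈ Finset.Icc 1 j →
      P {ω | A < X k n ω} ≤ ENNReal.ofReal
        (((m * j : ℕ) : ℝ) ^ (-f (((m * j : ℕ) : ℝ) / ((k * n : ℕ) : ℝ)))) := by
    intro k n hk hn
    rw [Finset.mem_Icc] at hk hn
    have hτ := hτpos k n hk.1 hn.1
    set τ := tauPhi φ P (X k n) with hτdef
    obtain ⟨hF1, hF2⟩ := hf m j k n hk.1 hk.2 hn.1 hn.2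
    set F := f (((m * j : ℕ) : ℝ) / ((k * n : ℕ) : ℝ)) with hFdef
    have hch := chernoff_phi P φ ψ hφ hψ (X k n) (hsub k n hk.1 hn.1).2.2 hτ A hA0
    refine le_trans hch (ENNReal.ofReal_le_ofReal ?_)
    set x := A / τ with hxdef
    -- F * L ≤ ψ x
    have hFu : F * u ≤ x := by
      rw [hxdef, hAdef]
      calc F * u ≤ (g L / τ) * u := mul_le_mul_of_nonneg_right hF2 hu
        _ = g L * u / τ := by ring
    have hub : ∀ s : ℝ, u * s - φ s ≤ ψ x / F := by
      intro s
      rw [le_div_iff₀ (by linarith : (0:ℝ) < F)]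
      have h1 : x * |s| - φ |s| ≤ ψ x := (hψ x).1 ⟨|s|, rfl⟩
      have h2 : φ |s| = φ s := phi_abs hφ s
      have h3 : 0 ≤ φ s := phi_nonneg hφ s
      have h4 : F * u * s ≤ F * u * |s| :=
        mul_le_mul_of_nonneg_left (le_abs_self s) (by positivity)
      have h5 : F * u * |s| ≤ x * |s| :=
        mul_le_mul_of_nonneg_right hFu (abs_nonneg s)
      nlinarith
    have hψuF : ψ u ≤ ψ x / F := by
      apply (hψ u).2
      rintro z ⟨s, rfl⟩
      exact hub s
    have hFL : F * L ≤ ψ x := by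
      rw [← hψu]
      rw [le_div_iff₀ (by linarith : (0:ℝ) < F)] at hψuF
      linarith [hψuF]
    -- exp(-ψ x) ≤ (mj)^(-F)
    calc Real.exp (-ψ x) ≤ Real.exp (-(F * L)) := Real.exp_le_exp.mpr (by linarith)
      _ = ((m * j : ℕ) : ℝ) ^ (-F) := by
          rw [Real.rpow_def_of_pos hmjpos]; ring_nf; rfl
  -- sum up
  calc P (⋃ k ∈ Finset.Icc 1 m, ⋃ n ∈ Finset.Icc 1 j, {ω | A < X k n ω})
      ≤ ∑ k ∈ Finset.Icc 1 m, P (⋃ n ∈ Finset.Icc 1 j, {ω | A < X k n ω}) :=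
        measure_biUnion_finset_le _ _
    _ ≤ ∑ k ∈ Finset.Icc 1 m, ∑ n ∈ Finset.Icc 1 j, P {ω | A < X k n ω} :=
        Finset.sum_le_sum (fun k _ => measure_biUnion_finset_le _ _)
    _ ≤ ∑ k ∈ Finset.Icc 1 m, ∑ n ∈ Finset.Icc 1 j, ENNReal.ofReal
          (((m * j : ℕ) : ℝ) ^ (-f (((m * j : ℕ) : ℝ) / ((k * n : ℕ) : ℝ)))) :=
        Finset.sum_le_sum (fun k hk => Finset.sum_le_sum (fun n hn => hterm k n hk hn))
    _ = ENNReal.ofReal (∑ k ∈ Finset.Icc 1 m, ∑ n ∈ Finset.Icc 1 j,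
          ((m * j : ℕ) : ℝ) ^ (-f (((m * j : ℕ) : ℝ) / ((k * n : ℕ) : ℝ)))) := by
        rw [ENNReal.ofReal_sum_of_nonneg]
        · exact Finset.sum_congr rfl (fun k _ => (ENNReal.ofReal_sum_of_nonneg
            (fun n _ => Real.rpow_nonneg hmjpos.le _)).symm)
        · intro k _
          exact Finset.sum_nonneg (fun n _ => Real.rpow_nonneg hmjpos.le _)
end

section
/- Let {X_{k,n} : k,n ≥ 1} be a double array of independent φ-subgaussian random variables with τ_φ(X_{k,n}) = 1 for all k,n, and let a_{m,j} = ψ^{−1}(ln(mj)). Assume: (i) there exists a strictly increasing function κ : (0,∞) → (0,∞) and a constant C > 0 such that P(X_{k,n} > x) ≥ C exp(−κ(x)) for all k,n ≥ 1 and x > 0; (ii) there exist x₀ > 0 and constants B, C₁ > 0 such that exp(−κ(x)) ≥ C₁ exp(−B ψ(x)) for all x ≥ x₀; (iii) for some ε > 0 there is C₂ < +∞ with sup_{x > x₀} q_φ(x + ε)/ψ(x) ≤ C₂. Then there exists a constant C′ > 0 such that for all m,j ≥ 1 with ψ^{−1}(ln(mj)) ≥ x₀, P(Y⁺_{m,j}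 > ε) ≥ C′ (mj)^{1 − B(1 + C₂ ε)}. -/
open MeasureTheory Real Filter Set

private lemma aux_one_sub_exp (u : ℝ) (hu : 0 ≤ u) :
    (1 - Real.exp (-1)) * min u 1 ≤ 1 - Real.exp (-u) := by
  rcases le_total u 1 with h | h
  · rw [min_eq_left h]
    have hc := convexOn_exp.2 (Set.mem_univ (0:ℝ)) (Set.mem_univ (-1:ℝ))
      (by linarith : (0:ℝ) ≤ 1 - u) hu (by ring)
    simp only [smul_eq_mul, mul_zero, zero_add, Real.exp_zero, mul_neg_one, mul_one] at hc
    nlinarith [hc]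
  · rw [min_eq_right h]
    have h2 : Real.exp (-u) ≤ Real.exp (-1) := Real.exp_le_exp.2 (by linarith)
    linarith

private lemma aux_pow_le (t : ℝ) (h0 : 0 ≤ t) (h1 : t ≤ 1) (N : ℕ) :
    (1 - t) ^ N ≤ Real.exp (-(t * N)) := by
  have ha : 1 - t ≤ Real.exp (-t) := by linarith [Real.add_one_le_exp (-t)]
  calc (1 - t) ^ N ≤ (Real.exp (-t)) ^ N := pow_le_pow_left₀ (by linarith) ha N
  _ = Real.exp (-(t * N)) := by
      rw [← Real.exp_nat_mul]; ring_nf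

private lemma aux_chernoff {Ω : Type*} [MeasurableSpace Ω] (P : Measure Ω)
    [IsProbabilityMeasure P] (X : Ω → ℝ) (φ : ℝ → ℝ) (a t x : ℝ)
    (h : PhiMGF φ P X a) (ht : 0 < t) :
    P {ω | x < X ω} ≤ ENNReal.ofReal (Real.exp (φ (a * t) - t * x)) := by
  obtain ⟨ha, hmgf⟩ := h
  obtain ⟨hint, hbound⟩ := hmgf t
  set A : Set Ω := {ω | Real.exp (t * x) ≤ Real.exp (t * X ω)} with hA
  have hsub : {ω | x < X ω} ⊆ A := by
    intro ω hω
    exact Real.exp_le_exp.2 (mul_le_mul_of_nonneg_left (le_of_lt hω) ht.le)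
  have hmark := mul_meas_ge_le_integral_of_nonneg
    (Filter.Eventually.of_forall fun ω => (Real.exp_pos (t * X ω)).le) hint (Real.exp (t * x))
  have h1 : (P A).toReal ≤ Real.exp (φ (a * t) - t * x) := by
    rw [Real.exp_sub, le_div_iff₀ (Real.exp_pos _)]
    calc (P A).toReal * Real.exp (t * x) = Real.exp (t * x) * (P A).toReal := by ring
    _ ≤ ∫ ω, Real.exp (t * X ω) ∂P := hmark
    _ ≤ Real.exp (φ (a * t)) := hbound
  calc P {ω | x < X ω} ≤ P A := measure_mono hsub
  _ = ENNReal.ofReal ((P A).toReal) := (ENNReal.ofReal_toReal (measure_ne_top _ _)).symm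
  _ ≤ ENNReal.ofReal (Real.exp (φ (a * t) - t * x)) := ENNReal.ofReal_le_ofReal h1

set_option maxHeartbeats 1000000 in
/-- under the assumptions of Theorem 5, there exists `C' > 0` such
that `P(Y⁺_{m,j} > ε) ≥ C' (mj)^{1 - B(1 + C₂ ε)}` for all `m, j ≥ 1` with
`ψ⁻¹(ln(mj)) ≥ x₀`, where `a_{m,j} = ψ⁻¹(ln(mj))`. -/
theorem prob_pos_part_ge
    {Ω : Type*} [MeasurableSpace Ω] (P : Measure Ω) [IsProbabilityMeasure P]
    (φ ψ ψinv q : ℝ → ℝ) (hφ : IsOrliczN φ) (hψ : IsYoungFenchel φ ψ)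
    (hq_mono : MonotoneOn q (Set.Ici 0)) (hq_nonneg : ∀ x, 0 ≤ x → 0 ≤ q x)
    (hψq : ∀ x, 0 ≤ x → ψ x = ∫ t in (0:ℝ)..x, q t)
    (hψinv : ∀ x, 0 ≤ x → 0 ≤ ψinv x ∧ ψ (ψinv x) = x)
    (X : ℕ → ℕ → Ω → ℝ)
    (hsub : ∀ k n : ℕ, 1 ≤ k → 1 ≤ n → IsPhiSubGaussian φ P (X k n))
    (hτ : ∀ k n : ℕ, 1 ≤ k → 1 ≤ n → tauPhi φ P (X k n) = 1)
    (hindep : ProbabilityTheory.iIndepFun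
      (fun p : ℕ × ℕ => X p.1 p.2) P)
    (κ : ℝ → ℝ) (hκ_pos : ∀ x, 0 < x → 0 < κ x) (hκ_mono : StrictMonoOn κ (Set.Ioi 0))
    (C : ℝ) (hC : 0 < C)
    (htail : ∀ k n : ℕ, 1 ≤ k → 1 ≤ n → ∀ x : ℝ, 0 < x →
      ENNReal.ofReal (C * Real.exp (-κ x)) ≤ P {ω | x < X k n ω})
    (x₀ B C₁ : ℝ) (hx₀ : 0 < x₀) (hB : 0 < B) (hC₁ : 0 < C₁)
    (hκψ : ∀ x : ℝ, x₀ ≤ x → C₁ * Real.exp (-(B * ψ x)) ≤ Real.exp (-κ x))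
    (ε C₂ : ℝ) (hε : 0 < ε) (hC₂ : ∀ x : ℝ, x₀ < x → q (x + ε) / ψ x ≤ C₂) :
    ∃ C' : ℝ, 0 < C' ∧ ∀ m j : ℕ, 1 ≤ m → 1 ≤ j →
      x₀ ≤ ψinv (Real.log ((m * j : ℕ) : ℝ)) →
      ENNReal.ofReal (C' * ((m * j : ℕ) : ℝ) ^ (1 - B * (1 + C₂ * ε)))
        ≤ P {ω | ε < max (runMax X m j ω - ψinv (Real.log ((m * j : ℕ) : ℝ))) 0} := by
  classical
  -- basic positivity / monotonicity facts
  have hφmono : MonotoneOn φ (Set.Ici 0) := hφ.strictMonoOn.monotoneOn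
  have hφ0 : ∀ y, 0 ≤ φ y := by
    intro y
    rcases le_total 0 y with hy | hy
    · have h := hφmono Set.self_mem_Ici (Set.mem_Ici.2 hy) hy
      rw [hφ.map_zero] at h; exact h
    · rw [← hφ.even]
      have h := hφmono Set.self_mem_Ici (Set.mem_Ici.2 (neg_nonneg.2 hy)) (neg_nonneg.2 hy)
      rw [hφ.map_zero] at h; exact h
  have hψ0 : ∀ x, 0 ≤ ψ x := by
    intro x
    have hm : (0:ℝ) ∈ {z | ∃ y, z = x * y - φ y} := ⟨0, by simp [hφ.map_zero]⟩
    exact (hψ x).1 hm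
  have hqint : ∀ x y : ℝ, 0 ≤ x → x ≤ y → IntervalIntegrable q MeasureTheory.volume x y := by
    intro x y hx hxy
    apply MonotoneOn.intervalIntegrable
    apply hq_mono.mono
    rw [Set.uIcc_of_le hxy]
    intro z hz
    exact Set.mem_Ici.2 (le_trans hx hz.1)
  have hsplit : ∀ x y : ℝ, 0 ≤ x → x ≤ y → ψ y = ψ x + ∫ t in x..y, q t := by
    intro x y hx hxy
    rw [hψq x hx, hψq y (le_trans hx hxy),
      ← intervalIntegral.integral_add_adjacent_intervals (hqint 0 x le_rfl hx)
        (hqint x y hx hxy)]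
  have hseg_ub : ∀ x y : ℝ, 0 ≤ x → x ≤ y → (∫ t in x..y, q t) ≤ (y - x) * q y := by
    intro x y hx hxy
    calc (∫ t in x..y, q t) ≤ ∫ _t in x..y, q y :=
          intervalIntegral.integral_mono_on hxy (hqint x y hx hxy) intervalIntegrable_const
            (fun s hs => hq_mono (Set.mem_Ici.2 (le_trans hx hs.1))
              (Set.mem_Ici.2 (le_trans hx hxy)) hs.2)
    _ = (y - x) * q y := by rw [intervalIntegral.integral_const, smul_eq_mul]
  have hseg_nonneg : ∀ x y : ℝ, 0 ≤ x → x ≤ y → 0 ≤ ∫ t in x..y, q t := by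
    intro x y hx hxy
    exact intervalIntegral.integral_nonneg hxy (fun s hs => hq_nonneg s (le_trans hx hs.1))
  have hψmono : ∀ x y : ℝ, 0 ≤ x → x ≤ y → ψ x ≤ ψ y := by
    intro x y hx hxy
    rw [hsplit x y hx hxy]
    linarith [hseg_nonneg x y hx hxy]
  have hC₂0 : 0 ≤ C₂ := by
    refine le_trans ?_ (hC₂ (x₀ + 1) (by linarith))
    exact div_nonneg (hq_nonneg _ (by linarith)) (hψ0 _)
  -- Lemma A : q (a + ε) ≤ C₂ ψ a  for a ≥ x₀ with ψ a > 0
  have hqC₂ : ∀ a : ℝ, x₀ ≤ a → 0 < ψ a → q (a + ε) ≤ C₂ * ψ a := by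
    intro a hax hψa
    have ha0 : 0 ≤ a := le_trans hx₀.le hax
    have hall : ∀ η : ℝ, 0 < η → q (a + ε) ≤ C₂ * ψ a + η := by
      intro η hη
      have hq1 : 0 ≤ q (a + 1) := hq_nonneg _ (by linarith)
      have hden : 0 < C₂ * q (a + 1) + 1 := by positivity
      set δ : ℝ := min 1 (η / (C₂ * q (a + 1) + 1)) with hδdef
      have hδpos : 0 < δ := lt_min one_pos (div_pos hη hden)
      have hδ1 : δ ≤ 1 := min_le_left _ _
      have hx' : x₀ < a + δ := by linarith
      have hψx' : 0 < ψ (a + δ) := lt_of_lt_of_le hψa (hψmono a (a + δ) ha0 (by linarith))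
      have h1 : q (a + δ + ε) ≤ C₂ * ψ (a + δ) := by
        have h := hC₂ (a + δ) hx'
        rwa [div_le_iff₀ hψx'] at h
      have h2 : q (a + ε) ≤ q (a + δ + ε) :=
        hq_mono (Set.mem_Ici.2 (by linarith)) (Set.mem_Ici.2 (by linarith)) (by linarith)
      have h3 : ψ (a + δ) ≤ ψ a + δ * q (a + 1) := by
        have h4 := hseg_ub a (a + δ) ha0 (by linarith)
        have h5 : q (a + δ) ≤ q (a + 1) :=
          hq_mono (Set.mem_Ici.2 (by linarith)) (Set.mem_Ici.2 (by linarith)) (by linarith)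
        have h6 := hsplit a (a + δ) ha0 (by linarith)
        nlinarith [hδpos.le]
      have h7 : δ * (C₂ * q (a + 1) + 1) ≤ η := by
        have hδle : δ ≤ η / (C₂ * q (a + 1) + 1) := min_le_right _ _
        calc δ * (C₂ * q (a + 1) + 1) ≤ (η / (C₂ * q (a + 1) + 1)) * (C₂ * q (a + 1) + 1) :=
              mul_le_mul_of_nonneg_right hδle hden.le
        _ = η := div_mul_cancel₀ η hden.ne'
      calc q (a + ε) ≤ C₂ * ψ (a + δ) := h2.trans h1
      _ ≤ C₂ * (ψ a + δ * q (a + 1)) := mul_le_mul_of_nonneg_left h3 hC₂0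
      _ ≤ C₂ * ψ a + η := by nlinarith [hδpos.le]
    by_contra hcon
    push_neg at hcon
    have := hall ((q (a + ε) - C₂ * ψ a) / 2) (by linarith)
    linarith
  -- Lemma B : B ≥ 1
  have hB1 : 1 ≤ B := by
    by_contra hlt
    push_neg at hlt
    obtain ⟨-, -, a₀, ha₀⟩ := hsub 1 1 le_rfl le_rfl
    set Sa : Set ℝ := {a | PhiMGF φ P (X 1 1) a} with hSa
    have hSne : Sa.Nonempty := ⟨a₀, ha₀⟩
    have hτ11 : sInf Sa = 1 := hτ 1 1 le_rfl le_rfl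
    have hbdd : BddBelow Sa := ⟨0, fun b hb => hb.1.le⟩
    have hge1 : ∀ b ∈ Sa, 1 ≤ b := fun b hb => hτ11 ▸ csInf_le hbdd hb
    set c₀ : ℝ := -Real.log (C * C₁) with hc₀
    have key : ∀ b ∈ Sa, ∀ x : ℝ, x₀ ≤ x → ψ (x / b) ≤ max 0 (B * ψ x + c₀) := by
      intro b hb x hxx
      have hb1 : 1 ≤ b := hge1 b hb
      have hb0 : 0 < b := lt_of_lt_of_le one_pos hb1
      have hx0 : 0 < x := lt_of_lt_of_le hx₀ hxx
      refine (hψ (x / b)).2 ?_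
      rintro z ⟨y, rfl⟩
      rcases le_or_gt y 0 with hy | hy
      · have h1 : x / b * y ≤ 0 := mul_nonpos_of_nonneg_of_nonpos (by positivity) hy
        have h2 := hφ0 y
        exact le_trans (by linarith) (le_max_left _ _)
      · have ht : 0 < y / b := div_pos hy hb0
        have hch := aux_chernoff P (X 1 1) φ b (y / b) x hb ht
        rw [show b * (y / b) = y by field_simp] at hch
        have hlow := htail 1 1 le_rfl le_rfl x hx0
        have hlow2 : C₁ * Real.exp (-(B * ψ x)) ≤ Real.exp (-κ x) := hκψ x hxx
        have hcomb2 : C * Real.exp (-κ x) ≤ Real.exp (φ y - y / b * x) :=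
          (ENNReal.ofReal_le_ofReal_iff (Real.exp_pos _).le).1 (le_trans hlow hch)
        have hcomb3 : C * C₁ * Real.exp (-(B * ψ x)) ≤ Real.exp (φ y - y / b * x) := by
          calc C * C₁ * Real.exp (-(B * ψ x)) = C * (C₁ * Real.exp (-(B * ψ x))) := by ring
          _ ≤ C * Real.exp (-κ x) := mul_le_mul_of_nonneg_left hlow2 hC.le
          _ ≤ _ := hcomb2
        have hCC₁ : 0 < C * C₁ := mul_pos hC hC₁
        have hlog : Real.log (C * C₁ * Real.exp (-(B * ψ x))) ≤ φ y - y / b * x := by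
          rw [Real.log_le_iff_le_exp (by positivity)]
          exact hcomb3
        rw [Real.log_mul hCC₁.ne' (Real.exp_pos _).ne', Real.log_exp] at hlog
        have hxy : x / b * y = y / b * x := by ring
        refine le_trans ?_ (le_max_right 0 (B * ψ x + c₀))
        rw [hxy, hc₀]
        linarith
    set x₁ : ℝ := max x₀ (φ 1 + ((|c₀| + 2) / (1 - B) + 2)) with hx₁
    have hx₁x₀ : x₀ ≤ x₁ := le_max_left _ _
    have hx₁pos : 0 < x₁ := lt_of_lt_of_le hx₀ hx₁x₀
    have hψx₁ : (|c₀| + 2) / (1 - B) + 2 ≤ ψ x₁ := by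
      have h1 : x₁ * 1 - φ 1 ≤ ψ x₁ := (hψ x₁).1 ⟨1, rfl⟩
      have h2 : φ 1 + ((|c₀| + 2) / (1 - B) + 2) ≤ x₁ := le_max_right _ _
      linarith
    have hq₁ : 0 ≤ q x₁ := hq_nonneg _ hx₁pos.le
    set θ : ℝ := 1 / (x₁ * (q x₁ + 1)) with hθ
    have hθpos : 0 < θ := by positivity
    obtain ⟨b, hbS, hblt⟩ := Real.lt_sInf_add_pos hSne hθpos
    rw [hτ11] at hblt
    have hb1 : 1 ≤ b := hge1 b hbS
    have hb0 : 0 < b := lt_of_lt_of_le one_pos hb1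
    have hxb0 : 0 ≤ x₁ / b := by positivity
    have hxble : x₁ / b ≤ x₁ := by
      rw [div_le_iff₀ hb0]; nlinarith
    have hsp := hsplit (x₁ / b) x₁ hxb0 hxble
    have hub := hseg_ub (x₁ / b) x₁ hxb0 hxble
    have hkey := key b hbS x₁ hx₁x₀
    have hbound : (x₁ - x₁ / b) * q x₁ ≤ 1 := by
      have e2 : x₁ * (2 - b) ≤ x₁ / b := by
        rw [le_div_iff₀ hb0]; nlinarith [sq_nonneg (b - 1), hx₁pos.le]
      have f1 : x₁ - x₁ / b ≤ x₁ * (b - 1) := by nlinarith [e2]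
      have f2 : x₁ * (b - 1) ≤ x₁ * θ := mul_le_mul_of_nonneg_left (by linarith) hx₁pos.le
      have f3 : x₁ * θ * (q x₁ + 1) = 1 := by
        rw [hθ]; field_simp
      nlinarith [hq₁, mul_le_mul_of_nonneg_right (f1.trans f2) hq₁, hθpos.le, hx₁pos.le]
    have hfinal : ψ x₁ ≤ max 0 (B * ψ x₁ + c₀) + 1 := by
      calc ψ x₁ = ψ (x₁ / b) + ∫ t in (x₁ / b)..x₁, q t := hsp
      _ ≤ max 0 (B * ψ x₁ + c₀) + (x₁ - x₁ / b) * q x₁ := add_le_add hkey hub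
      _ ≤ _ := by linarith
    have h1B : 0 < 1 - B := by linarith
    have habs1 := abs_nonneg c₀
    have habs2 := le_abs_self c₀
    rcases le_or_gt (B * ψ x₁ + c₀) 0 with hm | hm
    · rw [max_eq_left hm] at hfinal
      have hpos : 0 ≤ (|c₀| + 2) / (1 - B) := div_nonneg (by positivity) h1B.le
      linarith
    · rw [max_eq_right hm.le] at hfinal
      have h3 : (|c₀| + 2) ≤ ψ x₁ * (1 - B) := by
        have h4 : (|c₀| + 2) / (1 - B) ≤ ψ x₁ := by linarith
        exact (div_le_iff₀ h1B).1 h4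
      linarith [hfinal, h3, habs2]
  have hβ1 : 1 ≤ B * (1 + C₂ * ε) := by
    nlinarith [mul_nonneg (mul_nonneg hB.le hC₂0) hε.le]
  -- constants
  have hCexp0 : 0 < 1 - Real.exp (-1) := by
    have h : Real.exp (-1:ℝ) < 1 := by
      rw [Real.exp_lt_one_iff]; norm_num
    linarith
  have hK1 : 0 < (1 - Real.exp (-1)) * min (C * C₁) 1 :=
    mul_pos hCexp0 (lt_min (mul_pos hC hC₁) one_pos)
  have hK2 : 0 < C * Real.exp (-κ (ψinv 0 + ε)) := mul_pos hC (Real.exp_pos _)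
  refine ⟨min ((1 - Real.exp (-1)) * min (C * C₁) 1) (C * Real.exp (-κ (ψinv 0 + ε))),
    lt_min hK1 hK2, ?_⟩
  intro m j hm hj hax
  set C' : ℝ := min ((1 - Real.exp (-1)) * min (C * C₁) 1) (C * Real.exp (-κ (ψinv 0 + ε)))
    with hC'def
  set N : ℕ := m * j with hN
  have hN1 : 1 ≤ N := by
    calc 1 = 1 * 1 := rfl
    _ ≤ m * j := Nat.mul_le_mul hm hj
  have hNr1 : (1:ℝ) ≤ (N:ℝ) := by exact_mod_cast hN1
  set L : ℝ := Real.log (N:ℝ) with hLdef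
  have hL0 : 0 ≤ L := Real.log_nonneg hNr1
  obtain ⟨ha0, hψa⟩ := hψinv L hL0
  set a : ℝ := ψinv L with hadef
  -- rewrite the event
  have hsetE : {ω | ε < max (runMax X m j ω - a) 0} = {ω | a + ε < runMax X m j ω} := by
    ext ω
    simp only [Set.mem_setOf_eq, lt_max_iff]
    constructor
    · rintro (h | h)
      · linarith
      · linarith
    · intro h; left; linarith
  rw [hsetE]
  have hfin : ∀ ω : Ω,
      ({y | ∃ k n, 1 ≤ k ∧ k ≤ m ∧ 1 ≤ n ∧ n ≤ j ∧ y = X k n ω}).Finite := by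
    intro ω
    apply Set.Finite.subset (Set.Finite.image (fun p : ℕ × ℕ => X p.1 p.2 ω)
      (Set.finite_Icc (1,1) (m,j)))
    rintro y ⟨k, n, hk1, hkm, hn1, hnj, rfl⟩
    exact ⟨(k, n), ⟨⟨hk1, hn1⟩, ⟨hkm, hnj⟩⟩, rfl⟩
  have hXle : ∀ (ω : Ω) (k n : ℕ), 1 ≤ k → k ≤ m → 1 ≤ n → n ≤ j →
      X k n ω ≤ runMax X m j ω := by
    intro ω k n hk1 hkm hn1 hnj
    exact le_csSup (Set.Finite.bddAbove (hfin ω)) ⟨k, n, hk1, hkm, hn1, hnj, rfl⟩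
  have haε0 : 0 < a + ε := by linarith [lt_of_lt_of_le hx₀ hax]
  rcases eq_or_lt_of_le hN1 with hNeq | hN2
  · -- case N = 1
    have hNr : (N:ℝ) = 1 := by rw [← hNeq]; norm_num
    have hLz : L = 0 := by rw [hLdef, hNr, Real.log_one]
    have hsub1 : {ω | a + ε < X 1 1 ω} ⊆ {ω | a + ε < runMax X m j ω} := by
      intro ω hω
      exact lt_of_lt_of_le hω (hXle ω 1 1 le_rfl hm le_rfl hj)
    calc ENNReal.ofReal (C' * (N:ℝ) ^ (1 - B * (1 + C₂ * ε)))
        ≤ ENNReal.ofReal (C * Real.exp (-κ (a + ε))) := by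
          apply ENNReal.ofReal_le_ofReal
          rw [hNr, Real.one_rpow, mul_one, hadef, hLz]
          exact min_le_right _ _
    _ ≤ P {ω | a + ε < X 1 1 ω} := htail 1 1 le_rfl le_rfl (a + ε) haε0
    _ ≤ P {ω | a + ε < runMax X m j ω} := measure_mono hsub1
  · -- case N ≥ 2
    have hNr2 : (1:ℝ) < (N:ℝ) := by exact_mod_cast hN2
    have hL0' : 0 < L := Real.log_pos hNr2
    have hψapos : 0 < ψ a := by rw [hψa]; exact hL0'
    have hqa : q (a + ε) ≤ C₂ * L := by
      have := hqC₂ a hax hψapos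
      rwa [hψa] at this
    have haεψ : ψ (a + ε) ≤ (1 + C₂ * ε) * L := by
      have h1 := hsplit a (a + ε) (le_trans hx₀.le hax) (by linarith)
      have h2 := hseg_ub a (a + ε) (le_trans hx₀.le hax) (by linarith)
      have h3 : ε * q (a + ε) ≤ ε * (C₂ * L) := mul_le_mul_of_nonneg_left hqa hε.le
      rw [h1, hψa]
      nlinarith
    set t : ℝ := C * Real.exp (-κ (a + ε)) with htdef
    have ht0 : 0 < t := mul_pos hC (Real.exp_pos _)
    have ht1 : t ≤ 1 := by
      have h1 := htail 1 1 le_rfl le_rfl (a + ε) haε0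
      exact ENNReal.ofReal_le_one.1 (h1.trans prob_le_one)
    have htlb : C * C₁ * Real.exp (-(B * (1 + C₂ * ε) * L)) ≤ t := by
      have h1 : C₁ * Real.exp (-(B * ψ (a + ε))) ≤ Real.exp (-κ (a + ε)) :=
        hκψ (a + ε) (by linarith)
      have h2 : Real.exp (-(B * (1 + C₂ * ε) * L)) ≤ Real.exp (-(B * ψ (a + ε))) := by
        apply Real.exp_le_exp.2
        have := mul_le_mul_of_nonneg_left haεψ hB.le
        linarith
      calc C * C₁ * Real.exp (-(B * (1 + C₂ * ε) * L))
          ≤ C * C₁ * Real.exp (-(B * ψ (a + ε))) :=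
            mul_le_mul_of_nonneg_left h2 (by positivity)
      _ = C * (C₁ * Real.exp (-(B * ψ (a + ε)))) := by ring
      _ ≤ C * Real.exp (-κ (a + ε)) := mul_le_mul_of_nonneg_left h1 hC.le
    set S : Finset (ℕ × ℕ) := Finset.Icc 1 m ×ˢ Finset.Icc 1 j with hS
    have hcard : S.card = N := by
      rw [hS, Finset.card_product, Nat.card_Icc, Nat.card_Icc, hN]
      simp
    have hprod := hindep.measure_inter_preimage_eq_mul S
      (sets := fun _ => Set.Iic (a + ε)) (fun i _ => measurableSet_Iic)
    have hfac : ∀ p ∈ S,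
        P ((fun p : ℕ × ℕ => X p.1 p.2) p ⁻¹' Set.Iic (a + ε)) ≤ 1 - ENNReal.ofReal t := by
      rintro ⟨k, n⟩ hp
      simp only [hS, Finset.mem_product, Finset.mem_Icc] at hp
      obtain ⟨⟨hk1, hkm⟩, hn1, hnj⟩ := hp
      have hint : Integrable (X k n) P := (hsub k n hk1 hn1).1
      have hnm : NullMeasurable (X k n) P := hint.aemeasurable.nullMeasurable
      have hnms : NullMeasurableSet {ω | a + ε < X k n ω} P := hnm measurableSet_Ioi
      have hcompl : (fun p : ℕ × ℕ => X p.1 p.2) (k, n) ⁻¹' Set.Iic (a + ε)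
          = {ω | a + ε < X k n ω}ᶜ := by
        ext ω; simp [Set.mem_Iic, not_lt]
      rw [hcompl, measure_compl₀ hnms (measure_ne_top _ _), measure_univ]
      exact tsub_le_tsub_left (htail k n hk1 hn1 (a + ε) haε0) 1
    have hEc : {ω | a + ε < runMax X m j ω}ᶜ ⊆
        ⋂ p ∈ S, (fun p : ℕ × ℕ => X p.1 p.2) p ⁻¹' Set.Iic (a + ε) := by
      intro ω hω
      simp only [Set.mem_compl_iff, Set.mem_setOf_eq, not_lt] at hω
      simp only [Set.mem_iInter]
      rintro ⟨k, n⟩ hp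
      simp only [hS, Finset.mem_product, Finset.mem_Icc] at hp
      exact le_trans (hXle ω k n hp.1.1 hp.1.2 hp.2.1 hp.2.2) hω
    have hEcbound : P ({ω | a + ε < runMax X m j ω}ᶜ) ≤ ENNReal.ofReal ((1 - t) ^ N) := by
      calc P ({ω | a + ε < runMax X m j ω}ᶜ)
          ≤ P (⋂ p ∈ S, (fun p : ℕ × ℕ => X p.1 p.2) p ⁻¹' Set.Iic (a + ε)) :=
            measure_mono hEc
      _ = ∏ p ∈ S, P ((fun p : ℕ × ℕ => X p.1 p.2) p ⁻¹' Set.Iic (a + ε)) := hprod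
      _ ≤ ∏ _p ∈ S, (1 - ENNReal.ofReal t) := Finset.prod_le_prod' hfac
      _ = (1 - ENNReal.ofReal t) ^ N := by rw [Finset.prod_const, hcard]
      _ = (ENNReal.ofReal (1 - t)) ^ N := by
            rw [ENNReal.ofReal_sub 1 ht0.le, ENNReal.ofReal_one]
      _ = ENNReal.ofReal ((1 - t) ^ N) := (ENNReal.ofReal_pow (by linarith) N).symm
    have hE1 : 1 - ENNReal.ofReal ((1 - t) ^ N) ≤ P {ω | a + ε < runMax X m j ω} := by
      have h1 : (1 : ENNReal) ≤ P {ω | a + ε < runMax X m j ω}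
          + P ({ω | a + ε < runMax X m j ω}ᶜ) := by
        rw [← measure_univ (μ := P), ← Set.union_compl_self {ω | a + ε < runMax X m j ω}]
        exact measure_union_le _ _
      rw [tsub_le_iff_right]
      calc (1 : ENNReal) ≤ _ + P ({ω | a + ε < runMax X m j ω}ᶜ) := h1
      _ ≤ _ + ENNReal.ofReal ((1 - t) ^ N) := add_le_add_right hEcbound _
    have hNr0 : (0:ℝ) < (N:ℝ) := by linarith
    have hreal : C' * (N:ℝ) ^ (1 - B * (1 + C₂ * ε)) ≤ 1 - (1 - t) ^ N := by
      have hrpow1 : (N:ℝ) ^ (1 - B * (1 + C₂ * ε)) ≤ 1 :=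
        Real.rpow_le_one_of_one_le_of_nonpos hNr1 (by linarith)
      have hrpow0 : 0 ≤ (N:ℝ) ^ (1 - B * (1 + C₂ * ε)) := Real.rpow_nonneg hNr0.le _
      have hexp : Real.exp (-(B * (1 + C₂ * ε) * L)) = (N:ℝ) ^ (-(B * (1 + C₂ * ε))) := by
        rw [Real.rpow_def_of_pos hNr0, hLdef]; ring_nf
      have hsplitpow : (N:ℝ) ^ (1 - B * (1 + C₂ * ε))
          = (N:ℝ) ^ (-(B * (1 + C₂ * ε))) * (N:ℝ) := by
        rw [show (1 - B * (1 + C₂ * ε)) = -(B * (1 + C₂ * ε)) + 1 by ring,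
          Real.rpow_add hNr0, Real.rpow_one]
      have htN : C * C₁ * (N:ℝ) ^ (1 - B * (1 + C₂ * ε)) ≤ t * N := by
        rw [hsplitpow, ← hexp, ← mul_assoc]
        exact mul_le_mul_of_nonneg_right htlb hNr0.le
      have hmin : C' * (N:ℝ) ^ (1 - B * (1 + C₂ * ε))
          ≤ (1 - Real.exp (-1)) * min (t * N) 1 := by
        have h3 : min (C * C₁) 1 * (N:ℝ) ^ (1 - B * (1 + C₂ * ε)) ≤ min (t * N) 1 := by
          refine le_min ?_ ?_
          · calc min (C * C₁) 1 * (N:ℝ) ^ (1 - B * (1 + C₂ * ε))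
                ≤ (C * C₁) * (N:ℝ) ^ (1 - B * (1 + C₂ * ε)) :=
                  mul_le_mul_of_nonneg_right (min_le_left _ _) hrpow0
            _ ≤ t * N := htN
          · calc min (C * C₁) 1 * (N:ℝ) ^ (1 - B * (1 + C₂ * ε))
                ≤ 1 * (N:ℝ) ^ (1 - B * (1 + C₂ * ε)) :=
                  mul_le_mul_of_nonneg_right (min_le_right _ _) hrpow0
            _ ≤ 1 := by rw [one_mul]; exact hrpow1
        calc C' * (N:ℝ) ^ (1 - B * (1 + C₂ * ε))
            ≤ ((1 - Real.exp (-1)) * min (C * C₁) 1) * (N:ℝ) ^ (1 - B * (1 + C₂ * ε)) :=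
              mul_le_mul_of_nonneg_right (min_le_left _ _) hrpow0
        _ = (1 - Real.exp (-1)) * (min (C * C₁) 1 * (N:ℝ) ^ (1 - B * (1 + C₂ * ε))) := by
              ring
        _ ≤ (1 - Real.exp (-1)) * min (t * N) 1 := mul_le_mul_of_nonneg_left h3 hCexp0.le
      have haux1 := aux_one_sub_exp (t * N) (by positivity)
      have haux2 := aux_pow_le t ht0.le ht1 N
      linarith
    calc ENNReal.ofReal (C' * (N:ℝ) ^ (1 - B * (1 + C₂ * ε)))
        ≤ ENNReal.ofReal (1 - (1 - t) ^ N) := ENNReal.ofReal_le_ofReal hreal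
    _ = 1 - ENNReal.ofReal ((1 - t) ^ N) := by
        rw [ENNReal.ofReal_sub 1 (pow_nonneg (by linarith) N), ENNReal.ofReal_one]
    _ ≤ P {ω | a + ε < runMax X m j ω} := hE1
end
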